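/- arXiv:2408.05561 — 7 statements merged into one kernel-verified Lean document; each statement's English description precedes it below -/
import Mathlib

section
/- Let K be a field, R = K[x_1,…,x_n], I ⊆ R a monomial ideal, t a positive integer, 𝔭 a prime monomial ideal of R, and let y_1,…,y_s be distinct variables of R such that for each i = 1,…,s the ideal 𝔭\y_i (generated by the variables of 𝔭 other than y_i) is not an associated prime of R/(I\y_i)^t, where I\y_i denotes the deletion of y_i from I. Then 𝔭 ∈ Ass(R/I^t) if and only if 𝔭 ∈ Ass(R/(I^t :_R ∏_{i=1}^s y_i)). -/
open MvPolynomial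

/-- Deletion of the variable `x i` from a monomial ideal: set `x i = 0` in every generator. -/
noncomputable def deleteVar {K : Type*} [Field K] {n : ℕ} (i : Fin n)
    (I : Ideal (MvPolynomial (Fin n) K)) : Ideal (MvPolynomial (Fin n) K) :=
  I.map (aeval fun j => if j = i then (0 : MvPolynomial (Fin n) K) else X j).toRingHom

open Ideal

section Aux
variable {K : Type*} [Field K] {n : ℕ}

/-- span of a set of monomials -/
noncomputable def mSpan (T : Set (Fin n →₀ ℕ)) : Ideal (MvPolynomial (Fin n) K) :=
  Ideal.span ((fun d => monomial d (1 : K)) '' T)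

/-- the membership criterion ideal -/
noncomputable def mCrit (T : Set (Fin n →₀ ℕ)) : Ideal (MvPolynomial (Fin n) K) where
  carrier := {f | ∀ c ∈ f.support, ∃ d ∈ T, d ≤ c}
  zero_mem' := by simp
  add_mem' := by
    intro a b ha hb c hc
    rcases Finset.mem_union.1 (MvPolynomial.support_add hc) with h | h
    · exact ha c h
    · exact hb c h
  smul_mem' := by
    intro r f hf c hc
    rw [smul_eq_mul] at hc
    obtain ⟨a, _, b, hb, rfl⟩ := Finset.mem_add.1 (MvPolynomial.support_mul _ _ hc)
    obtain ⟨d, hd, hdb⟩ := hf b hb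
    exact ⟨d, hd, hdb.trans (le_add_self)⟩

theorem mem_mSpan {T : Set (Fin n →₀ ℕ)} {f : MvPolynomial (Fin n) K} :
    f ∈ mSpan T ↔ ∀ c ∈ f.support, ∃ d ∈ T, d ≤ c := by
  constructor
  · intro hf
    have : mSpan (K := K) T ≤ mCrit T := by
      refine Ideal.span_le.2 ?_
      intro a ha
      obtain ⟨d, hd, rfl⟩ := ha
      intro c hc
      rcases Finset.mem_singleton.1 (MvPolynomial.support_monomial_subset hc) with rfl
      exact ⟨_, hd, le_rfl⟩
    exact this hf
  · intro h
    rw [← support_sum_monomial_coeff f]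
    refine Ideal.sum_mem _ fun c hc => ?_
    obtain ⟨d, hdT, hdc⟩ := h c hc
    have : monomial c (coeff c f) = monomial (c - d) (coeff c f) * monomial d 1 := by
      rw [monomial_mul, mul_one, tsub_add_cancel_of_le hdc]
    rw [this]
    exact Ideal.mul_mem_left _ _ (Ideal.subset_span ⟨d, hdT, rfl⟩)

theorem monomial_mem_mSpan {T : Set (Fin n →₀ ℕ)} {c : Fin n →₀ ℕ} :
    monomial c (1 : K) ∈ mSpan T ↔ ∃ d ∈ T, d ≤ c := by
  rw [mem_mSpan]
  constructor
  · intro h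
    refine h c ?_
    rw [mem_support_iff, coeff_monomial, if_pos rfl]
    exact one_ne_zero
  · intro h c' hc'
    rcases Finset.mem_singleton.1 (MvPolynomial.support_monomial_subset hc') with rfl
    exact h
end Aux
section Aux2
variable {K : Type*} [Field K] {n : ℕ}

/-- iterated sumset -/
def setPow (S : Set (Fin n →₀ ℕ)) : ℕ → Set (Fin n →₀ ℕ)
  | 0 => {0}
  | t + 1 => Set.image2 (· + ·) S (setPow S t)

theorem setPow_mono {S S' : Set (Fin n →₀ ℕ)} (h : S ⊆ S') (t : ℕ) :
    setPow S t ⊆ setPow S' t := by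
  induction t with
  | zero => exact le_rfl
  | succ t ih => exact Set.image2_subset h ih

theorem setPow_apply_eq_zero {S : Set (Fin n →₀ ℕ)} {z : Fin n} :
    ∀ t : ℕ, ∀ d : Fin n →₀ ℕ, d ∈ setPow S t → d z = 0 →
      d ∈ setPow {e ∈ S | e z = 0} t
  | 0, d, hd, _ => hd
  | t + 1, _, hd, hz => by
    obtain ⟨a, ha, b, hb, rfl⟩ := hd
    have h1 : a z + b z = 0 := by simpa using hz
    exact ⟨a, ⟨ha, by omega⟩, b, setPow_apply_eq_zero t b hb (by omega), rfl⟩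

theorem mSpan_pow (S : Set (Fin n →₀ ℕ)) (t : ℕ) :
    (mSpan (K := K) S) ^ t = mSpan (setPow S t) := by
  induction t with
  | zero =>
    rw [pow_zero, setPow]
    have : mSpan (K := K) ({0} : Set (Fin n →₀ ℕ)) = Ideal.span {1} := by
      rw [mSpan, Set.image_singleton, monomial_zero']
      norm_num
    rw [this, Ideal.span_singleton_one, Ideal.one_eq_top]
  | succ t ih =>
    rw [pow_succ', ih, mSpan, mSpan, Ideal.span_mul_span', mSpan]
    congr 1
    ext x
    constructor
    · rintro ⟨_, ⟨a, ha, rfl⟩, _, ⟨b, hb, rfl⟩, rfl⟩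
      exact ⟨a + b, ⟨a, ha, b, hb, rfl⟩, by simp [monomial_mul]⟩
    · rintro ⟨_, ⟨a, ha, b, hb, rfl⟩, rfl⟩
      exact ⟨_, ⟨a, ha, rfl⟩, _, ⟨b, hb, rfl⟩, by simp [monomial_mul]⟩

theorem support_mul_monomial (r : MvPolynomial (Fin n) K) (e : Fin n →₀ ℕ) (c : Fin n →₀ ℕ) :
    c ∈ (r * monomial e (1 : K)).support ↔ ∃ b ∈ r.support, c = b + e := by
  constructor
  · intro hc
    rw [mem_support_iff, coeff_mul_monomial'] at hc
    split_ifs at hc with h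
    · rw [mul_one] at hc
      exact ⟨c - e, mem_support_iff.2 hc, (tsub_add_cancel_of_le h).symm⟩
    · exact absurd rfl hc
  · rintro ⟨b, hb, rfl⟩
    rw [mem_support_iff, coeff_mul_monomial, mul_one]
    exact mem_support_iff.1 hb

theorem mSpan_colon_monomial (T : Set (Fin n →₀ ℕ)) (e : Fin n →₀ ℕ) :
    (mSpan (K := K) T).colon ((Ideal.span {monomial e 1} : Ideal (MvPolynomial (Fin n) K)) : Set (MvPolynomial (Fin n) K)) = mSpan ((fun d => d - e) '' T) := by
  ext r
  rw [Ideal.mem_colon_span_singleton, mem_mSpan, mem_mSpan]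
  constructor
  · intro h c hc
    obtain ⟨d, hd, hdc⟩ := h (c + e) ((support_mul_monomial r e _).2 ⟨c, hc, rfl⟩)
    exact ⟨d - e, ⟨d, hd, rfl⟩, tsub_le_iff_right.2 hdc⟩
  · intro h c hc
    obtain ⟨b, hb, rfl⟩ := (support_mul_monomial r e c).1 hc
    obtain ⟨_, ⟨d, hd, rfl⟩, hdb⟩ := h b hb
    exact ⟨d, hd, le_trans (le_tsub_add) (add_le_add hdb le_rfl)⟩

theorem colon_colon (J : Ideal (MvPolynomial (Fin n) K)) (a b : MvPolynomial (Fin n) K) :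
    (J.colon ((Ideal.span {a} : Ideal (MvPolynomial (Fin n) K)) : Set (MvPolynomial (Fin n) K))).colon ((Ideal.span {b} : Ideal (MvPolynomial (Fin n) K)) : Set (MvPolynomial (Fin n) K)) = J.colon ((Ideal.span {a * b} : Ideal (MvPolynomial (Fin n) K)) : Set (MvPolynomial (Fin n) K)) := by
  ext r
  rw [Ideal.mem_colon_span_singleton, Ideal.mem_colon_span_singleton, Ideal.mem_colon_span_singleton]
  rw [mul_comm a b, ← mul_assoc]

theorem mem_assPrimes_quot_iff {J p : Ideal (MvPolynomial (Fin n) K)} :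
    p ∈ associatedPrimes (MvPolynomial (Fin n) K) ((MvPolynomial (Fin n) K) ⧸ J) ↔
      p.IsPrime ∧ ∃ g, p = J.colon ((Ideal.span {g} : Ideal (MvPolynomial (Fin n) K)) : Set (MvPolynomial (Fin n) K)) := by
  have key : ∀ g : MvPolynomial (Fin n) K,
      (⊥ : Submodule (MvPolynomial (Fin n) K) ((MvPolynomial (Fin n) K) ⧸ J)).colon
        {(Ideal.Quotient.mk J g)} = J.colon ((Ideal.span {g} : Ideal (MvPolynomial (Fin n) K)) : Set (MvPolynomial (Fin n) K)) := by
    intro g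
    ext r
    rw [Submodule.mem_colon_singleton, Submodule.mem_bot, Ideal.mem_colon_span_singleton]
    have hs : r • (Ideal.Quotient.mk J) g = (Ideal.Quotient.mk J) (r * g) := rfl
    rw [hs, Ideal.Quotient.eq_zero_iff_mem]
  constructor
  · intro hmem
    obtain ⟨hp, x, hx⟩ := isAssociatedPrime_iff.1 hmem
    obtain ⟨g, rfl⟩ := Ideal.Quotient.mk_surjective x
    exact ⟨hp, g, by rw [hx, key]⟩
  · rintro ⟨hp, g, hg⟩
    exact isAssociatedPrime_iff.2 ⟨hp, Ideal.Quotient.mk J g, by rw [hg, key]⟩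

end Aux2
section Aux3
variable {K : Type*} [Field K] {n : ℕ}

open Classical in
theorem span_X_eq_ker (B : Set (Fin n)) :
    Ideal.span (X '' B) =
      RingHom.ker ((aeval fun j => if j ∈ B then (0 : MvPolynomial (Fin n) K) else X j :
        MvPolynomial (Fin n) K →ₐ[K] MvPolynomial (Fin n) K)).toRingHom := by
  set ψ := ((aeval fun j => if j ∈ B then (0 : MvPolynomial (Fin n) K) else X j :
      MvPolynomial (Fin n) K →ₐ[K] MvPolynomial (Fin n) K)).toRingHom with hψ
  have hX : ∀ j, ψ (X j) = if j ∈ B then 0 else X j := fun j => aeval_X _ j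
  apply le_antisymm
  · refine Ideal.span_le.2 ?_
    rintro a ⟨j, hj, rfl⟩
    rw [SetLike.mem_coe, RingHom.mem_ker, hX, if_pos hj]
  · intro f hf
    rw [RingHom.mem_ker] at hf
    have key : ∀ f : MvPolynomial (Fin n) K, f - ψ f ∈ Ideal.span (X '' B) := by
      intro f
      induction f using MvPolynomial.induction_on with
      | C a => rw [show ψ (C a) = C a from aeval_C _ a, sub_self]; exact Ideal.zero_mem _
      | add p q hp hq =>
        rw [map_add]
        have : p + q - (ψ p + ψ q) = (p - ψ p) + (q - ψ q) := by ring
        rw [this]; exact Ideal.add_mem _ hp hq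
      | mul_X p j hp =>
        rw [_root_.map_mul, hX j]
        by_cases hj : j ∈ B
        · rw [if_pos hj, mul_zero, sub_zero]
          exact Ideal.mul_mem_left _ _ (Ideal.subset_span ⟨j, hj, rfl⟩)
        · rw [if_neg hj]
          have : p * X j - ψ p * X j = (p - ψ p) * X j := by ring
          rw [this]; exact Ideal.mul_mem_right _ _ hp
    have := key f
    rwa [hf, sub_zero] at this

theorem isPrime_span_X (B : Set (Fin n)) :
    (Ideal.span (X '' B) : Ideal (MvPolynomial (Fin n) K)).IsPrime := by
  rw [span_X_eq_ker]
  exact RingHom.ker_isPrime _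

theorem deleteVar_span_X (z : Fin n) (A : Set (Fin n)) :
    deleteVar z (Ideal.span (X '' A)) =
      (Ideal.span (X '' (A \ {z})) : Ideal (MvPolynomial (Fin n) K)) := by
  rw [deleteVar, Ideal.map_span]
  have hX : ∀ j : Fin n,
      ((aeval fun j => if j = z then (0 : MvPolynomial (Fin n) K) else X j :
        MvPolynomial (Fin n) K →ₐ[K] MvPolynomial (Fin n) K)).toRingHom (X j)
        = if j = z then 0 else X j := fun j => aeval_X _ j
  apply le_antisymm
  · refine Ideal.span_le.2 ?_
    rintro a ⟨_, ⟨j, hj, rfl⟩, rfl⟩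
    rw [SetLike.mem_coe, hX]
    by_cases h : j = z
    · rw [if_pos h]; exact Ideal.zero_mem _
    · rw [if_neg h]; exact Ideal.subset_span ⟨j, ⟨hj, by simpa using h⟩, rfl⟩
  · refine Ideal.span_le.2 ?_
    rintro a ⟨j, hj, rfl⟩
    refine Ideal.subset_span ⟨X j, ⟨j, hj.1, rfl⟩, ?_⟩
    rw [hX, if_neg (show ¬ j = z by simpa using hj.2)]

theorem deleteVar_mSpan (z : Fin n) (T : Set (Fin n →₀ ℕ)) :
    deleteVar z (mSpan (K := K) T) = mSpan {d ∈ T | d z = 0} := by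
  rw [deleteVar, mSpan, Ideal.map_span]
  set φ := ((aeval fun j => if j = z then (0 : MvPolynomial (Fin n) K) else X j :
    MvPolynomial (Fin n) K →ₐ[K] MvPolynomial (Fin n) K)).toRingHom with hφ
  have hmon : ∀ d : Fin n →₀ ℕ, φ (monomial d (1 : K)) =
      if d z = 0 then monomial d 1 else 0 := by
    intro d
    have : φ (monomial d (1 : K)) =
        Finsupp.prod d fun i k => (if i = z then (0 : MvPolynomial (Fin n) K) else X i) ^ k := by
      rw [hφ, AlgHom.toRingHom_eq_coe, RingHom.coe_coe, aeval_monomial, map_one, one_mul]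
    rw [this]
    by_cases hz : d z = 0
    · rw [if_pos hz]
      rw [monomial_eq, C_1, one_mul]
      apply Finsupp.prod_congr
      intro i hi
      have : i ≠ z := fun h => by
        subst h; exact (Finsupp.mem_support_iff.1 hi) hz
      rw [if_neg this]
    · rw [if_neg hz]
      apply Finset.prod_eq_zero (Finsupp.mem_support_iff.2 hz)
      have : (if z = z then (0 : MvPolynomial (Fin n) K) else X z) ^ d z = 0 := by
        rw [if_pos rfl]; exact zero_pow hz
      exact this
  apply le_antisymm
  · refine Ideal.span_le.2 ?_
    rintro a ⟨_, ⟨d, hd, rfl⟩, rfl⟩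
    rw [SetLike.mem_coe, hmon]
    by_cases h : d z = 0
    · rw [if_pos h]; exact Ideal.subset_span ⟨d, ⟨hd, h⟩, rfl⟩
    · rw [if_neg h]; exact Ideal.zero_mem _
  · refine Ideal.span_le.2 ?_
    rintro a ⟨d, hd, rfl⟩
    refine Ideal.subset_span ⟨monomial d 1, ⟨d, hd.1, rfl⟩, ?_⟩
    rw [hmon, if_pos hd.2]

theorem dichotomy (J p : Ideal (MvPolynomial (Fin n) K)) (hp : p.IsPrime)
    (v g : MvPolynomial (Fin n) K) (h : p = J.colon ((Ideal.span {g} : Ideal (MvPolynomial (Fin n) K)) : Set (MvPolynomial (Fin n) K))) :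
    (∃ a, p = (J.colon ((Ideal.span {v} : Ideal (MvPolynomial (Fin n) K)) : Set (MvPolynomial (Fin n) K))).colon ((Ideal.span {a} : Ideal (MvPolynomial (Fin n) K)) : Set (MvPolynomial (Fin n) K))) ∨
      (∃ b, p = (J ⊔ Ideal.span {v}).colon ((Ideal.span {b} : Ideal (MvPolynomial (Fin n) K)) : Set (MvPolynomial (Fin n) K))) := by
  by_cases hc : ∀ r, r * g ∈ J ⊔ Ideal.span {v} → r * g ∈ J
  · right
    refine ⟨g, ?_⟩
    ext r
    rw [h, Ideal.mem_colon_span_singleton, Ideal.mem_colon_span_singleton]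
    exact ⟨fun hr => (le_sup_left : J ≤ J ⊔ Ideal.span {v}) hr, hc r⟩
  · left
    push_neg at hc
    obtain ⟨r₀, h1, h2⟩ := hc
    obtain ⟨u, hu, w, hw, huw⟩ := Submodule.mem_sup.1 h1
    obtain ⟨b, hb⟩ := Ideal.mem_span_singleton'.1 hw
    have hr₀ : r₀ ∉ p := by
      rw [h, Ideal.mem_colon_span_singleton]; exact h2
    refine ⟨b, ?_⟩
    rw [colon_colon]
    ext r
    rw [h, Ideal.mem_colon_span_singleton, Ideal.mem_colon_span_singleton]
    have hvb : v * b = r₀ * g - u := by rw [mul_comm v b, hb, ← huw]; ring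
    constructor
    · intro hr
      have e1 : r * (v * b) = r₀ * (r * g) - r * u := by rw [hvb]; ring
      rw [e1]
      exact Ideal.sub_mem _ (Ideal.mul_mem_left _ _ hr) (Ideal.mul_mem_left _ _ hu)
    · intro hr
      have e2 : (r * r₀) * g = r * (v * b) + r * u := by rw [hvb]; ring
      have hrr : r * r₀ ∈ p := by
        rw [h, Ideal.mem_colon_span_singleton, e2]
        exact Ideal.add_mem _ hr (Ideal.mul_mem_left _ _ hu)
      rcases hp.mem_or_mem hrr with h' | h'
      · rw [h, Ideal.mem_colon_span_singleton] at h'; exact h'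
      · exact absurd h' hr₀

end Aux3
section Aux4
variable {K : Type*} [Field K] {n : ℕ}

theorem X_eq_monomial' (j : Fin n) : (X j : MvPolynomial (Fin n) K) =
    monomial (Finsupp.single j 1) 1 := rfl

theorem spanX_eq_mSpan (B : Set (Fin n)) :
    (Ideal.span (X '' B) : Ideal (MvPolynomial (Fin n) K)) =
      mSpan ((fun j => Finsupp.single j 1) '' B) := by
  rw [mSpan, Set.image_image]
  rfl

theorem prod_monomial {ι : Type*} (F : Finset ι) (d : ι → (Fin n →₀ ℕ)) :
    (∏ i ∈ F, monomial (d i) (1 : K)) = monomial (∑ i ∈ F, d i) 1 := by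
  classical
  induction F using Finset.cons_induction with
  | empty => simp [monomial_zero']
  | cons i F hi ih => rw [Finset.prod_cons, Finset.sum_cons, ih, monomial_mul, one_mul]

theorem witness {T : Set (Fin n →₀ ℕ)} {A : Set (Fin n)}
    {p : Ideal (MvPolynomial (Fin n) K)} (hpA : p = Ideal.span (X '' A))
    (hp : p.IsPrime) {g : MvPolynomial (Fin n) K}
    (hpg : p = (mSpan (K := K) T).colon ((Ideal.span {g} : Ideal (MvPolynomial (Fin n) K)) : Set (MvPolynomial (Fin n) K))) :
    ∃ e : Fin n →₀ ℕ, p = (mSpan T).colon ((Ideal.span {monomial e 1} : Ideal (MvPolynomial (Fin n) K)) : Set (MvPolynomial (Fin n) K)) := by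
  have step1 : ∀ c ∈ g.support,
      p ≤ (mSpan (K := K) T).colon ((Ideal.span {monomial c 1} : Ideal (MvPolynomial (Fin n) K)) : Set (MvPolynomial (Fin n) K)) := by
    intro c hc
    rw [hpA, Ideal.span_le]
    rintro a ⟨j, hj, rfl⟩
    rw [SetLike.mem_coe, Ideal.mem_colon_span_singleton]
    have hXj : X j ∈ p := hpA ▸ Ideal.subset_span ⟨j, hj, rfl⟩
    rw [hpg, Ideal.mem_colon_span_singleton] at hXj
    rw [X_eq_monomial', monomial_mul, one_mul, monomial_mem_mSpan]
    have hsupp : Finsupp.single j 1 + c ∈ (X j * g).support := by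
      rw [X_eq_monomial', mem_support_iff, coeff_monomial_mul, one_mul]
      exact mem_support_iff.1 hc
    exact (mem_mSpan.1 hXj) _ hsupp
  have step2 : (g.support.inf fun c =>
      (mSpan (K := K) T).colon ((Ideal.span {monomial c 1} : Ideal (MvPolynomial (Fin n) K)) : Set (MvPolynomial (Fin n) K))) ≤ p := by
    rw [hpg]
    intro r hr
    rw [Ideal.mem_colon_span_singleton]
    have hrg : r * g = ∑ c ∈ g.support, C (coeff c g) * (r * monomial c 1) := by
      conv_lhs => rw [← support_sum_monomial_coeff g]
      rw [Finset.mul_sum]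
      refine Finset.sum_congr rfl fun c _ => ?_
      have : monomial c (coeff c g) = C (coeff c g) * monomial c 1 := by
        rw [C_mul_monomial, mul_one]
      rw [this]; ring
    rw [hrg]
    refine Ideal.sum_mem _ fun c hc => Ideal.mul_mem_left _ _ ?_
    have := (Submodule.mem_finsetInf.1 hr) c hc
    rwa [Ideal.mem_colon_span_singleton] at this
  obtain ⟨c, hcs, hcle⟩ := (Ideal.IsPrime.inf_le' hp).1 step2
  exact ⟨c, le_antisymm (step1 c hcs) hcle⟩

end Aux4
section Aux5
variable {K : Type*} [Field K] {n : ℕ}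

theorem setPow_z_zero {S : Set (Fin n →₀ ℕ)} {z : Fin n} :
    ∀ t : ℕ, ∀ d : Fin n →₀ ℕ, d ∈ setPow {e ∈ S | e z = 0} t → d z = 0
  | 0, d, hd => by rw [Set.mem_singleton_iff.1 hd]; rfl
  | t + 1, _, ⟨a, ha, b, hb, rfl⟩ => by
    have h1 : a z = 0 := ha.2
    have h2 : b z = 0 := setPow_z_zero t b hb
    show (a + b) z = 0
    rw [Finsupp.add_apply, h1, h2]
end Aux5

theorem stmt_0 {K : Type*} [Field K] {n : ℕ}
    (I : Ideal (MvPolynomial (Fin n) K))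
    (hI : ∃ S : Set (Fin n →₀ ℕ),
      I = Ideal.span ((fun d => (monomial d (1 : K))) '' S))
    (t : ℕ) (ht : 1 ≤ t)
    (A : Set (Fin n)) (p : Ideal (MvPolynomial (Fin n) K))
    (hpA : p = Ideal.span (X '' A)) (hp : p.IsPrime)
    (s : ℕ) (y : Fin s → Fin n) (hy : Function.Injective y)
    (hdel : ∀ i : Fin s,
      deleteVar (y i) p ∉
        associatedPrimes (MvPolynomial (Fin n) K)
          ((MvPolynomial (Fin n) K) ⧸ (deleteVar (y i) I) ^ t)) :
    p ∈ associatedPrimes (MvPolynomial (Fin n) K) ((MvPolynomial (Fin n) K) ⧸ I ^ t) ↔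
      p ∈ associatedPrimes (MvPolynomial (Fin n) K)
        ((MvPolynomial (Fin n) K) ⧸ (I ^ t).colon ((Ideal.span {∏ i : Fin s, X (y i)} : Ideal (MvPolynomial (Fin n) K)) :
            Set (MvPolynomial (Fin n) K))) := by
  classical
  obtain ⟨S, hIm⟩ := hI
  rw [show Ideal.span ((fun d => (monomial d (1 : K))) '' S) = mSpan S from rfl] at hIm
  have hJ : I ^ t = mSpan (K := K) (setPow S t) := by rw [hIm, mSpan_pow]
  set c : ℕ → (Fin n →₀ ℕ) := fun k =>
    ∑ i ∈ Finset.univ.filter (fun i : Fin s => (i : ℕ) < k), Finsupp.single (y i) 1 with hc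
  have hprod : (∏ i : Fin s, X (y i) : MvPolynomial (Fin n) K) = monomial (c s) 1 := by
    calc (∏ i : Fin s, X (y i) : MvPolynomial (Fin n) K)
        = ∏ i : Fin s, monomial (Finsupp.single (y i) 1) (1 : K) :=
          Finset.prod_congr rfl fun i _ => X_eq_monomial' (y i)
      _ = monomial (∑ i : Fin s, Finsupp.single (y i) 1) 1 := prod_monomial _ _
      _ = monomial (c s) 1 := by
          have hcs : c s = ∑ i : Fin s, Finsupp.single (y i) 1 := by
            simp only [hc]
            rw [Finset.filter_true_of_mem fun i _ => i.isLt]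
          rw [hcs]
  constructor
  · intro hmem
    rw [mem_assPrimes_quot_iff] at hmem ⊢
    obtain ⟨hp', g₀, hg₀⟩ := hmem
    have key : ∀ k : ℕ, k ≤ s → ∃ g, p = ((I ^ t).colon
        ((Ideal.span {monomial (c k) 1} : Ideal (MvPolynomial (Fin n) K)) : Set (MvPolynomial (Fin n) K))).colon ((Ideal.span {g} : Ideal (MvPolynomial (Fin n) K)) : Set (MvPolynomial (Fin n) K)) := by
      intro k
      induction k with
      | zero =>
        intro _
        refine ⟨g₀, ?_⟩
        have h0 : c 0 = 0 := by simp [hc]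
        have h1 : (I ^ t).colon ((Ideal.span {monomial (c 0) (1 : K)} : Ideal (MvPolynomial (Fin n) K)) : Set (MvPolynomial (Fin n) K)) = I ^ t := by
          ext r
          rw [Ideal.mem_colon_span_singleton, h0, monomial_zero', C_1, mul_one]
        rw [h1]
        exact hg₀
      | succ k ih =>
        intro hk1
        have hklt : k < s := Nat.lt_of_succ_le hk1
        obtain ⟨g, hg⟩ := ih (Nat.le_of_succ_le hk1)
        set z : Fin n := y ⟨k, hklt⟩ with hzdef
        have hckz : (c k) z = 0 := by
          simp only [hc]
          rw [Finset.sum_apply']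
          refine Finset.sum_eq_zero fun i hi => ?_
          have hiy : y i ≠ z := by
            intro h
            have : i = ⟨k, hklt⟩ := hy h
            rw [this] at hi
            rw [Finset.mem_filter] at hi
            simp at hi
          exact Finsupp.single_eq_of_ne hiy.symm
        have hcsucc : c (k + 1) = c k + Finsupp.single z 1 := by
          have hfil : Finset.univ.filter (fun i : Fin s => (i : ℕ) < k + 1) =
              insert ⟨k, hklt⟩ (Finset.univ.filter (fun i : Fin s => (i : ℕ) < k)) := by
            ext i
            simp only [Finset.mem_filter, Finset.mem_insert, Finset.mem_univ, true_and]
            constructor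
            · intro h
              rcases Nat.lt_succ_iff_lt_or_eq.1 h with h | h
              · exact Or.inr h
              · exact Or.inl (Fin.ext h)
            · rintro (rfl | h)
              · exact Nat.lt_succ_self k
              · exact Nat.lt_succ_of_lt h
          have hnot : (⟨k, hklt⟩ : Fin s) ∉
              Finset.univ.filter (fun i : Fin s => (i : ℕ) < k) := by
            simp
          simp only [hc]
          rw [hfil, Finset.sum_insert hnot, add_comm]
        rcases dichotomy _ p hp (X z) g hg with ⟨a, ha⟩ | ⟨b, hb⟩
        · refine ⟨a, ?_⟩
          have h2 : (I ^ t).colon ((Ideal.span {monomial (c (k + 1)) (1 : K)} : Ideal (MvPolynomial (Fin n) K)) : Set (MvPolynomial (Fin n) K)) =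
              ((I ^ t).colon ((Ideal.span {monomial (c k) 1} : Ideal (MvPolynomial (Fin n) K)) : Set (MvPolynomial (Fin n) K))).colon
                ((Ideal.span {X z} : Ideal (MvPolynomial (Fin n) K)) : Set (MvPolynomial (Fin n) K)) := by
            rw [colon_colon, X_eq_monomial', monomial_mul, mul_one, ← hcsucc]
          rw [h2]
          exact ha
        · exfalso
          have hsup : (I ^ t).colon ((Ideal.span {monomial (c k) (1 : K)} : Ideal (MvPolynomial (Fin n) K)) : Set (MvPolynomial (Fin n) K)) ⊔
              Ideal.span {X z}
              = mSpan (((fun d => d - c k) '' setPow S t) ∪ {Finsupp.single z 1}) := by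
            rw [hJ, mSpan_colon_monomial, X_eq_monomial', mSpan, mSpan, ← Ideal.span_union,
              Set.image_union, Set.image_singleton]
          rw [hsup] at hb
          obtain ⟨e, he⟩ := witness hpA hp hb
          have hez : e z = 0 := by
            by_contra hez
            have hmem1 : monomial e (1 : K) ∈
                mSpan (((fun d => d - c k) '' setPow S t) ∪ {Finsupp.single z 1}) :=
              monomial_mem_mSpan.2 ⟨Finsupp.single z 1, Or.inr rfl, by
                rw [Finsupp.single_le_iff]; omega⟩
            have h1p : (1 : MvPolynomial (Fin n) K) ∈ p := by
              rw [he, Ideal.mem_colon_span_singleton, one_mul]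
              exact hmem1
            exact hp.ne_top ((Ideal.eq_top_iff_one _).2 h1p)
          set S' := {d ∈ S | d z = 0} with hS'
          set Q : Ideal (MvPolynomial (Fin n) K) := mSpan (setPow S' t) with hQ
          set e' := e + c k with he'
          have mem_iff : ∀ w : Fin n →₀ ℕ, w z = 0 →
              (monomial w (1 : K) ∈ p ↔
                monomial w (1 : K) ∈ Q.colon ((Ideal.span {monomial e' 1} : Ideal (MvPolynomial (Fin n) K)) : Set (MvPolynomial (Fin n) K))) := by
            intro w hw
            rw [he, Ideal.mem_colon_span_singleton, Ideal.mem_colon_span_singleton,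
              monomial_mul, one_mul, monomial_mul, one_mul,
              monomial_mem_mSpan, monomial_mem_mSpan]
            constructor
            · rintro ⟨d₀, hd₀ | hd₀, hle⟩
              · obtain ⟨d, hdS, rfl⟩ := hd₀
                have hd1 : d ≤ w + e + c k := tsub_le_iff_right.1 hle
                have hdz : d z = 0 := by
                  have := Finsupp.le_def.1 hd1 z
                  simp only [Finsupp.add_apply, hw, hez, hckz] at this
                  omega
                refine ⟨d, setPow_apply_eq_zero t d hdS hdz, ?_⟩
                rw [he', ← add_assoc]
                exact hd1
              · exfalso
                obtain rfl := Set.mem_singleton_iff.1 hd₀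
                have := Finsupp.le_def.1 hle z
                simp only [Finsupp.single_eq_same, Finsupp.add_apply, hw, hez] at this
                omega
            · rintro ⟨d, hdS, hle⟩
              refine ⟨d - c k, Or.inl ⟨d, setPow_mono (fun x hx => hx.1) t hdS, rfl⟩, ?_⟩
              rw [tsub_le_iff_right, add_assoc, ← he']
              exact hle
          set pz : Ideal (MvPolynomial (Fin n) K) := Ideal.span (X '' (A \ {z})) with hpz
          have hpzQ : pz = Q.colon ((Ideal.span {monomial e' 1} : Ideal (MvPolynomial (Fin n) K)) : Set (MvPolynomial (Fin n) K)) := by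
            apply le_antisymm
            · rw [hpz, Ideal.span_le]
              rintro a ⟨j, hj, rfl⟩
              have hjz : ¬ j = z := by simpa using hj.2
              have hred : (Finsupp.single j 1 : Fin n →₀ ℕ) z = 0 :=
                Finsupp.single_eq_of_ne (Ne.symm hjz)
              rw [SetLike.mem_coe, X_eq_monomial', ← mem_iff _ hred, hpA]
              exact Ideal.subset_span ⟨j, hj.1, (X_eq_monomial' j).symm⟩
            · intro r hr
              rw [Ideal.mem_colon_span_singleton] at hr
              rw [hpz, spanX_eq_mSpan, mem_mSpan]
              intro b hb
              obtain ⟨d, hdS, hle⟩ := (mem_mSpan.1 hr) (b + e')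
                ((support_mul_monomial r e' _).2 ⟨b, hb, rfl⟩)
              have hdz : d z = 0 := setPow_z_zero t d hdS
              set b₀ := b - Finsupp.single z (b z) with hb₀
              have hb₀z : b₀ z = 0 := by
                rw [hb₀, Finsupp.tsub_apply, Finsupp.single_eq_same]
                omega
              have hb₀le : b₀ ≤ b := tsub_le_self
              have he'z : e' z = 0 := by
                rw [he', Finsupp.add_apply, hez, hckz]
              have hdb₀ : d ≤ b₀ + e' := by
                rw [Finsupp.le_def]
                intro i
                by_cases hiz : i = z
                · subst hiz
                  rw [Finsupp.add_apply, hdz]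
                  omega
                · have := Finsupp.le_def.1 hle i
                  rw [Finsupp.add_apply] at this ⊢
                  rw [hb₀, Finsupp.tsub_apply, Finsupp.single_eq_of_ne
                    hiz]
                  omega
              have hmem2 : monomial b₀ (1 : K) ∈ p := (mem_iff b₀ hb₀z).2 (by
                rw [Ideal.mem_colon_span_singleton, monomial_mul, one_mul, monomial_mem_mSpan]
                exact ⟨d, hdS, hdb₀⟩)
              rw [hpA, spanX_eq_mSpan, monomial_mem_mSpan] at hmem2
              obtain ⟨d', ⟨j, hjA, rfl⟩, hjle⟩ := hmem2
              have hjz : j ≠ z := by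
                intro h
                have h2 := Finsupp.le_def.1 hjle z
                rw [h, Finsupp.single_eq_same] at h2
                omega
              refine ⟨Finsupp.single j 1, ⟨j, ⟨hjA, by simpa using hjz⟩, rfl⟩, ?_⟩
              exact hjle.trans hb₀le
          have hQdel : (deleteVar z I) ^ t = Q := by
            rw [hIm, deleteVar_mSpan, mSpan_pow, hQ, hS']
          have hdelp : deleteVar z p = pz := by rw [hpA, deleteVar_span_X, hpz]
          apply hdel ⟨k, hklt⟩
          rw [← hzdef, mem_assPrimes_quot_iff]
          constructor
          · rw [hdelp, hpz]
            exact isPrime_span_X _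
          · exact ⟨monomial e' 1, by rw [hdelp, hQdel, hpzQ]⟩
    obtain ⟨g, hg⟩ := key s le_rfl
    refine ⟨hp, g, ?_⟩
    rw [hprod]
    exact hg
  · intro hmem
    rw [mem_assPrimes_quot_iff] at hmem ⊢
    obtain ⟨hp', g, hg⟩ := hmem
    exact ⟨hp, (∏ i : Fin s, X (y i)) * g, by rw [hg, colon_colon]⟩
end

section
/- Let K be a field and R = K[x_1,…,x_n]. If a square-free monomial ideal I ⊆ R is of well-nearly normally torsion-free type, then I is normal; equivalently (since I is a monomial ideal), for every integer s ≥ 1 and every monomial u ∈ R, if u^k ∈ I^{sk} for some integer k ≥ 1, then u ∈ I^s. -/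
open MvPolynomial

section Aux
variable {K : Type*} [Field K] {n : ℕ}

open scoped Classical in
/-- weighted degree of a monomial exponent with respect to a set of variables -/
noncomputable def wdeg (C : Set (Fin n)) (d : Fin n →₀ ℕ) : ℕ :=
  ∑ i : Fin n, if i ∈ C then d i else 0

open scoped Classical in
lemma wdeg_add (C : Set (Fin n)) (a b : Fin n →₀ ℕ) :
    wdeg C (a + b) = wdeg C a + wdeg C b := by
  rw [wdeg, wdeg, wdeg, ← Finset.sum_add_distrib]
  exact Finset.sum_congr rfl fun i _ => by split <;> simp

open scoped Classical in
lemma wdeg_smul (C : Set (Fin n)) (k : ℕ) (d : Fin n →₀ ℕ) :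
    wdeg C (k • d) = k * wdeg C d := by
  rw [wdeg, wdeg, Finset.mul_sum]
  exact Finset.sum_congr rfl fun i _ => by split <;> simp

open scoped Classical in
lemma wdeg_single {C : Set (Fin n)} {i : Fin n} (hi : i ∈ C) :
    wdeg C (Finsupp.single i 1) = 1 := by
  rw [wdeg, Finset.sum_eq_single i]
  · simp [hi]
  · intro j _ hj
    split
    · simp [Finsupp.single_apply, Ne.symm hj]
    · rfl
  · simp

open scoped Classical in
lemma exists_mem_of_wdeg_pos {C : Set (Fin n)} {d : Fin n →₀ ℕ} (h : 0 < wdeg C d) :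
    ∃ i ∈ C, d i ≠ 0 := by
  by_contra hc
  push_neg at hc
  have : wdeg C d = 0 := by
    rw [wdeg]
    refine Finset.sum_eq_zero fun i _ => ?_
    split
    · exact hc i ‹_›
    · rfl
  omega

lemma monomial_mem_spanX {C : Set (Fin n)} {d : Fin n →₀ ℕ} {c : K} {i : Fin n}
    (hi : i ∈ C) (hd : d i ≠ 0) :
    monomial d c ∈ Ideal.span (X '' C : Set (MvPolynomial (Fin n) K)) := by
  have hle : Finsupp.single i 1 ≤ d := by
    rw [Finsupp.single_le_iff]; omega
  have hX : (X i : MvPolynomial (Fin n) K) ∈ Ideal.span (X '' C) :=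
    Ideal.subset_span ⟨i, hi, rfl⟩
  have : monomial d c = monomial (d - Finsupp.single i 1) c * X i := by
    rw [X, monomial_mul, mul_one, tsub_add_cancel_of_le hle]
  rw [this]
  exact Ideal.mul_mem_left _ _ hX

lemma monomial_mem_pow_spanX {C : Set (Fin n)} {t : ℕ} {d : Fin n →₀ ℕ}
    (h : t ≤ wdeg C d) :
    monomial d (1 : K) ∈ (Ideal.span (X '' C : Set (MvPolynomial (Fin n) K))) ^ t := by
  induction t generalizing d with
  | zero => simp
  | succ t ih =>
    obtain ⟨i, hiC, hdi⟩ := exists_mem_of_wdeg_pos (C := C) (d := d) (by omega)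
    have hle : Finsupp.single i 1 ≤ d := by
      rw [Finsupp.single_le_iff]; omega
    have hdec : d = (d - Finsupp.single i 1) + Finsupp.single i 1 :=
      (tsub_add_cancel_of_le hle).symm
    have hwd : t ≤ wdeg C (d - Finsupp.single i 1) := by
      have := wdeg_add C (d - Finsupp.single i 1) (Finsupp.single i 1)
      rw [← hdec, wdeg_single hiC] at this
      omega
    have : monomial d (1 : K) = monomial (d - Finsupp.single i 1) 1 * X i := by
      rw [X, monomial_mul, mul_one, tsub_add_cancel_of_le hle]
    rw [this, pow_succ]
    exact Ideal.mul_mem_mul (ih hwd) (Ideal.subset_span ⟨i, hiC, rfl⟩)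

/-- the ideal of polynomials all of whose monomials have `wdeg ≥ t` -/
noncomputable def wIdeal (C : Set (Fin n)) (t : ℕ) : Ideal (MvPolynomial (Fin n) K) where
  carrier := {f | ∀ d ∈ f.support, t ≤ wdeg C d}
  zero_mem' := by simp
  add_mem' := by
    intro a b ha hb d hd
    rcases Finset.mem_union.mp (Finsupp.support_add hd) with h | h
    · exact ha d h
    · exact hb d h
  smul_mem' := by
    intro r f hf d hd
    rw [smul_eq_mul] at hd
    obtain ⟨a, ha, b, hb, rfl⟩ := Finset.mem_add.mp (support_mul r f hd)
    have := hf b hb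
    rw [wdeg_add]
    omega

lemma mul_wIdeal_le (C : Set (Fin n)) (a b : ℕ) :
    (wIdeal C a : Ideal (MvPolynomial (Fin n) K)) * wIdeal C b ≤ wIdeal C (a + b) := by
  rw [Ideal.mul_le]
  intro r hr s hs d hd
  obtain ⟨x, hx, y, hy, rfl⟩ := Finset.mem_add.mp (support_mul r s hd)
  have h1 := hr x hx
  have h2 := hs y hy
  rw [wdeg_add]
  omega

lemma pow_spanX_le_wIdeal (C : Set (Fin n)) (t : ℕ) :
    (Ideal.span (X '' C : Set (MvPolynomial (Fin n) K))) ^ t ≤ wIdeal C t := by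
  induction t with
  | zero => intro f _ d _; omega
  | succ t ih =>
    have h1 : Ideal.span (X '' C : Set (MvPolynomial (Fin n) K)) ≤ wIdeal C 1 := by
      rw [Ideal.span_le]
      rintro _ ⟨i, hi, rfl⟩ d hd
      rw [support_X] at hd
      rw [Finset.mem_singleton.mp hd]
      rw [wdeg_single hi]
    calc (Ideal.span (X '' C : Set (MvPolynomial (Fin n) K))) ^ (t+1)
        = (Ideal.span (X '' C)) ^ t * Ideal.span (X '' C) := pow_succ _ _
      _ ≤ wIdeal C t * wIdeal C 1 := Ideal.mul_mono ih h1
      _ ≤ wIdeal C (t + 1) := mul_wIdeal_le C t 1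

lemma wdeg_le_of_monomial_mem_pow {C : Set (Fin n)} {t : ℕ} {d : Fin n →₀ ℕ}
    (h : monomial d (1 : K) ∈ (Ideal.span (X '' C : Set (MvPolynomial (Fin n) K))) ^ t) :
    t ≤ wdeg C d := by
  have := pow_spanX_le_wIdeal C t h d ?_
  · exact this
  · classical
    rw [support_monomial]
    simp


open scoped Classical in
/-- restriction of a polynomial to monomials avoiding C -/
noncomputable def restr (C : Set (Fin n)) (f : MvPolynomial (Fin n) K) :
    MvPolynomial (Fin n) K :=
  ∑ d ∈ f.support.filter (fun d => ∀ i ∈ C, d i = 0), monomial d (coeff d f)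

open scoped Classical in
lemma coeff_restr (C : Set (Fin n)) (f : MvPolynomial (Fin n) K) (d : Fin n →₀ ℕ) :
    coeff d (restr C f) =
      if d ∈ f.support.filter (fun d => ∀ i ∈ C, d i = 0) then coeff d f else 0 := by
  rw [restr, coeff_sum]
  rw [Finset.sum_congr rfl (fun e _ => coeff_monomial d e (coeff e f))]
  exact Finset.sum_ite_eq' _ d (fun e => coeff e f)

open scoped Classical in
lemma sub_restr_mem (C : Set (Fin n)) (f : MvPolynomial (Fin n) K) :
    f - restr C f ∈ Ideal.span (X '' C : Set (MvPolynomial (Fin n) K)) := by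
  have h := as_sum f
  have hsplit := Finset.sum_filter_add_sum_filter_not f.support
    (fun d => ∀ i ∈ C, d i = 0) (fun d => monomial d (coeff d f))
  have : f - restr C f
      = ∑ d ∈ f.support.filter (fun d => ¬ ∀ i ∈ C, d i = 0), monomial d (coeff d f) := by
    rw [restr]
    nth_rewrite 1 [h]
    rw [← hsplit]
    ring
  rw [this]
  refine Ideal.sum_mem _ fun d hd => ?_
  rw [Finset.mem_filter] at hd
  push_neg at hd
  obtain ⟨i, hiC, hdi⟩ := hd.2
  -- monomial with d i ≠ 0 is in span
  have hle : Finsupp.single i 1 ≤ d := by rw [Finsupp.single_le_iff]; omega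
  have hX : (X i : MvPolynomial (Fin n) K) ∈ Ideal.span (X '' C) :=
    Ideal.subset_span ⟨i, hiC, rfl⟩
  have heq : monomial d (coeff d f) = monomial (d - Finsupp.single i 1) (coeff d f) * X i := by
    rw [X, monomial_mul, mul_one, tsub_add_cancel_of_le hle]
  rw [heq]
  exact Ideal.mul_mem_left _ _ hX

lemma spanX_isPrime (C : Set (Fin n)) :
    (Ideal.span (X '' C : Set (MvPolynomial (Fin n) K))).IsPrime := by
  classical
  constructor
  · rw [Ideal.ne_top_iff_one]
    intro h
    rw [mem_ideal_span_X_image] at h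
    obtain ⟨i, _, hi⟩ := h 0 (mem_support_iff.mpr (by simp))
    simp at hi
  · intro f g hfg
    by_contra hc
    push_neg at hc
    obtain ⟨hf, hg⟩ := hc
    -- restrictions are nonzero
    have hrf : restr C f ≠ 0 := by
      rw [mem_ideal_span_X_image] at hf
      push_neg at hf
      obtain ⟨d, hd, hdC⟩ := hf
      intro h0
      have := coeff_restr C f d
      rw [h0] at this
      simp only [coeff_zero] at this
      rw [if_pos] at this
      · exact mem_support_iff.mp hd this.symm
      · rw [Finset.mem_filter]
        exact ⟨hd, fun i hi => by have := hdC i hi; omega⟩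
    have hrg : restr C g ≠ 0 := by
      rw [mem_ideal_span_X_image] at hg
      push_neg at hg
      obtain ⟨d, hd, hdC⟩ := hg
      intro h0
      have := coeff_restr C g d
      rw [h0] at this
      simp only [coeff_zero] at this
      rw [if_pos] at this
      · exact mem_support_iff.mp hd this.symm
      · rw [Finset.mem_filter]
        exact ⟨hd, fun i hi => by have := hdC i hi; omega⟩
    -- product of restrictions is in the span
    have key : restr C f * restr C g ∈ Ideal.span (X '' C : Set (MvPolynomial (Fin n) K)) := by
      have h1 := sub_restr_mem C f
      have h2 := sub_restr_mem C g
      have : restr C f * restr C g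
          = f * g - ((f - restr C f) * g + restr C f * (g - restr C g)) := by ring
      rw [this]
      exact Ideal.sub_mem _ hfg (Ideal.add_mem _ (Ideal.mul_mem_right _ _ h1)
        (Ideal.mul_mem_left _ _ h2))
    -- but its support avoids C
    have hne : restr C f * restr C g ≠ 0 := mul_ne_zero hrf hrg
    obtain ⟨d, hd⟩ := (support_nonempty (p := restr C f * restr C g)).mpr hne
    obtain ⟨a, ha, b, hb, rfl⟩ := Finset.mem_add.mp (support_mul _ _ hd)
    rw [mem_ideal_span_X_image] at key
    obtain ⟨i, hiC, hi⟩ := key _ hd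
    have hsupp : ∀ (h : MvPolynomial (Fin n) K) (e : Fin n →₀ ℕ),
        e ∈ (restr C h).support → ∀ j ∈ C, e j = 0 := by
      intro h e he j hj
      rw [mem_support_iff, coeff_restr] at he
      by_cases hmem : e ∈ h.support.filter (fun d => ∀ i ∈ C, d i = 0)
      · exact (Finset.mem_filter.mp hmem).2 j hj
      · rw [if_neg hmem] at he; exact absurd rfl he
    have hia := hsupp f a ha i hiC
    have hib := hsupp g b hb i hiC
    rw [Finsupp.add_apply, hia, hib] at hi
    exact hi rfl

lemma prod_X_eq_monomial (T : Finset (Fin n)) :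
    (∏ i ∈ T, (X i : MvPolynomial (Fin n) K))
      = monomial (∑ i ∈ T, Finsupp.single i 1) (1 : K) := by
  classical
  induction T using Finset.induction_on with
  | empty => simp [monomial_zero', C_1]
  | insert _ _ h ih =>
    rw [Finset.prod_insert h, Finset.sum_insert h, ih, X, monomial_mul, mul_one]

lemma sum_single_apply (T : Finset (Fin n)) (j : Fin n) :
    (∑ i ∈ T, Finsupp.single i (1 : ℕ)) j = if j ∈ T then 1 else 0 := by
  classical
  induction T using Finset.induction_on with
  | empty => simp
  | insert _ _ h ih =>
    rename_i a T2
    rw [Finset.sum_insert h, Finsupp.add_apply, ih, Finsupp.single_apply]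
    by_cases hja : a = j
    · subst hja
      simp [h]
    · by_cases hjT : j ∈ T2 <;> simp [hja, Ne.symm hja, hjT, Finset.mem_insert]

lemma mem_span_prods_iff {S : Set (Finset (Fin n))} {f : MvPolynomial (Fin n) K} :
    f ∈ Ideal.span ((fun T => ∏ i ∈ T, (X i : MvPolynomial (Fin n) K)) '' S)
      ↔ ∀ d ∈ f.support, ∃ T ∈ S, ∀ i ∈ T, d i ≠ 0 := by
  have himg : ((fun T => ∏ i ∈ T, (X i : MvPolynomial (Fin n) K)) '' S)
      = ((fun e => monomial e (1 : K)) '' ((fun T => ∑ i ∈ T, Finsupp.single i 1) '' S)) := by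
    rw [Set.image_image]
    exact Set.image_congr fun T _ => prod_X_eq_monomial T
  rw [himg, mem_ideal_span_monomial_image]
  constructor
  · intro h d hd
    obtain ⟨e, ⟨T, hT, rfl⟩, hle⟩ := h d hd
    refine ⟨T, hT, fun i hi => ?_⟩
    have := hle i
    rw [sum_single_apply, if_pos hi] at this
    omega
  · intro h d hd
    obtain ⟨T, hT, hTd⟩ := h d hd
    refine ⟨_, ⟨T, hT, rfl⟩, fun i => ?_⟩
    rw [sum_single_apply]
    by_cases hi : i ∈ T
    · rw [if_pos hi]; have := hTd i hi; omega
    · rw [if_neg hi]; omega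

lemma radical_span_prods (S : Set (Finset (Fin n)))
    (I : Ideal (MvPolynomial (Fin n) K))
    (hIS : I = Ideal.span ((fun T => ∏ i ∈ T, (X i : MvPolynomial (Fin n) K)) '' S)) :
    I.radical = I := by
  refine le_antisymm ?_ Ideal.le_radical
  intro f hf
  rw [hIS, mem_span_prods_iff]
  intro d hd
  by_contra hcon
  push_neg at hcon
  -- C₀ = variables not appearing in d
  set C₀ : Set (Fin n) := {i | d i = 0} with hC₀
  -- I ≤ span (X '' C₀)
  have hle : I ≤ Ideal.span (X '' C₀ : Set (MvPolynomial (Fin n) K)) := by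
    rw [hIS, Ideal.span_le]
    rintro _ ⟨T, hT, rfl⟩
    dsimp only
    obtain ⟨i, hiT, hdi⟩ := hcon T hT
    have hX : (X i : MvPolynomial (Fin n) K) ∈ Ideal.span (X '' C₀) :=
      Ideal.subset_span ⟨i, by simpa [hC₀] using hdi, rfl⟩
    rw [← Finset.mul_prod_erase T _ hiT]
    exact Ideal.mul_mem_right _ _ hX
  have hfC : f ∈ Ideal.span (X '' C₀ : Set (MvPolynomial (Fin n) K)) := by
    have h1 : I.radical ≤ Ideal.span (X '' C₀ : Set (MvPolynomial (Fin n) K)) := by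
      rw [← (spanX_isPrime (K := K) C₀).radical]
      exact Ideal.radical_mono hle
    exact h1 hf
  rw [mem_ideal_span_X_image] at hfC
  obtain ⟨i, hiC, hi⟩ := hfC d hd
  exact hi (by simpa [hC₀] using hiC)

lemma minimalPrime_eq_spanX (S : Set (Finset (Fin n)))
    (I : Ideal (MvPolynomial (Fin n) K))
    (hIS : I = Ideal.span ((fun T => ∏ i ∈ T, (X i : MvPolynomial (Fin n) K)) '' S))
    {P : Ideal (MvPolynomial (Fin n) K)} (hP : P ∈ I.minimalPrimes) :
    ∃ C : Set (Fin n), P = Ideal.span (X '' C) := by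
  classical
  have hPprime : P.IsPrime := hP.1.1
  have hIP : I ≤ P := hP.1.2
  set C : Set (Fin n) := {i | X i ∈ P} with hC
  refine ⟨C, ?_⟩
  have h1 : Ideal.span (X '' C : Set (MvPolynomial (Fin n) K)) ≤ P := by
    rw [Ideal.span_le]
    rintro _ ⟨i, hi, rfl⟩
    exact hi
  have h2 : I ≤ Ideal.span (X '' C : Set (MvPolynomial (Fin n) K)) := by
    rw [hIS, Ideal.span_le]
    rintro _ ⟨T, hT, rfl⟩
    dsimp only
    have hmem : (∏ i ∈ T, (X i : MvPolynomial (Fin n) K)) ∈ P := by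
      apply hIP
      rw [hIS]
      exact Ideal.subset_span ⟨T, hT, rfl⟩
    obtain ⟨i, hiT, hiP⟩ := (Ideal.IsPrime.prod_mem_iff).mp hmem
    have hX : (X i : MvPolynomial (Fin n) K) ∈ Ideal.span (X '' C) :=
      Ideal.subset_span ⟨i, hiP, rfl⟩
    rw [← Finset.mul_prod_erase T _ hiT]
    exact Ideal.mul_mem_right _ _ hX
  exact le_antisymm (hP.2 ⟨spanX_isPrime C, h2⟩ h1) h1


lemma aux_inf_pow_le {R : Type*} [CommRing R] [IsNoetherianRing R] (I : Ideal R)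
    (hrad : I.radical = I) (hfin : I.minimalPrimes.Finite) (s : ℕ)
    (hAss : ∀ P : Ideal R, IsAssociatedPrime P (R ⧸ I ^ s) → P ∈ I.minimalPrimes) :
    (⨅ p ∈ I.minimalPrimes, p ^ s) ≤ I ^ s := by
  classical
  intro y hy
  by_contra hyI
  have hy0 : (Ideal.Quotient.mk (I ^ s) y) ≠ 0 := by
    rwa [Ne, Ideal.Quotient.eq_zero_iff_mem]
  obtain ⟨P, hPass, hPle⟩ :=
    exists_le_isAssociatedPrime_of_isNoetherianRing R (Ideal.Quotient.mk (I ^ s) y) hy0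
  have hPmin : P ∈ I.minimalPrimes := hAss P hPass
  have hPprime : P.IsPrime := hPmin.1.1
  set T : Finset (Ideal R) := hfin.toFinset.erase P with hT
  have hzex : ∀ p ∈ T, ∃ z, z ∈ p ∧ z ∉ P := by
    intro p hp
    rw [hT, Finset.mem_erase, Set.Finite.mem_toFinset] at hp
    by_contra h
    push_neg at h
    have hle : p ≤ P := fun z hz => by
      by_contra hzP
      exact hzP (h z hz)
    exact hp.1 (le_antisymm hle (hPmin.2 ⟨hp.2.1.1, hp.2.1.2⟩ hle))
  choose z hz1 hz2 using hzex
  set w : R := ∏ p ∈ T.attach, z p.1 p.2 with hw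
  have hwP : w ∉ P := by
    intro hmem
    rw [hw] at hmem
    obtain ⟨p, _, hzp⟩ := (Ideal.IsPrime.prod_mem_iff (hp := hPprime)).mp hmem
    exact hz2 p.1 p.2 hzp
  have hsInf : sInf I.minimalPrimes = I := by
    rw [Ideal.sInf_minimalPrimes, hrad]
  have hwmul : ∀ x ∈ P, w * x ∈ I := by
    intro x hx
    rw [← hsInf, Submodule.mem_sInf]
    intro p hp
    by_cases hpP : p = P
    · subst hpP
      exact Ideal.mul_mem_left p w hx
    · have hpT : p ∈ T := Finset.mem_erase.mpr ⟨hpP, hfin.mem_toFinset.mpr hp⟩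
      have hdvd : z p hpT ∣ w := by
        rw [hw]
        exact Finset.dvd_prod_of_mem _ (Finset.mem_attach T ⟨p, hpT⟩)
      obtain ⟨c, hc⟩ := hdvd
      rw [hc]
      exact Ideal.mul_mem_right _ p (Ideal.mul_mem_right _ p (hz1 p hpT))
  have hyP : y ∈ P ^ s := by
    have hle : (⨅ p ∈ I.minimalPrimes, p ^ s) ≤ P ^ s := biInf_le (fun p => p ^ s) hPmin
    exact hle hy
  have hws : w ^ s * y ∈ I ^ s := by
    have h1 : Ideal.span {w} * P ≤ I := by
      rw [Ideal.span_singleton_mul_le_iff]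
      exact hwmul
    have h2 : (Ideal.span {w} * P) ^ s ≤ I ^ s := Ideal.pow_right_mono h1 s
    refine h2 ?_
    rw [mul_pow, Ideal.span_singleton_pow]
    exact Ideal.mul_mem_mul (Ideal.mem_span_singleton_self _) hyP
  have hannmem : w ^ s ∈ (Submodule.span R {Ideal.Quotient.mk (I ^ s) y}).annihilator := by
    rw [Submodule.mem_annihilator_span_singleton]
    show w ^ s • Submodule.Quotient.mk y = 0
    rw [← Submodule.Quotient.mk_smul, Submodule.Quotient.mk_eq_zero, smul_eq_mul]
    exact hws
  exact hwP (hPprime.mem_of_pow_mem s (hPle (Submodule.mem_colon_singleton.mpr (Submodule.mem_bot R |>.mpr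
    ((Submodule.mem_annihilator_span_singleton _ _).mp hannmem)))))

end Aux

/-- A square-free monomial ideal `I` is of well-nearly normally torsion-free type. -/
def IsWellNearlyNTFType {K : Type*} [Field K] {n : ℕ}
    (I : Ideal (MvPolynomial (Fin n) K)) : Prop :=
  (∃ S : Set (Finset (Fin n)),
      I = Ideal.span ((fun T => ∏ i ∈ T, (X i : MvPolynomial (Fin n) K)) '' S)) ∧
  ∃ (ℓ m : ℕ) (A : Set (Fin n)), 1 ≤ ℓ ∧ 1 ≤ m ∧
    (∀ t : ℕ, 1 ≤ t → t ≤ m →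
      associatedPrimes (MvPolynomial (Fin n) K) ((MvPolynomial (Fin n) K) ⧸ I ^ t) =
        I.minimalPrimes) ∧
    (∀ t : ℕ, m + 1 ≤ t →
      associatedPrimes (MvPolynomial (Fin n) K) ((MvPolynomial (Fin n) K) ⧸ I ^ t) ⊆
        I.minimalPrimes ∪ {Ideal.span (X '' A)}) ∧
    (∀ s : ℕ, m + 1 ≤ s →
      Ideal.span (X '' A) ∈
        associatedPrimes (MvPolynomial (Fin n) K) ((MvPolynomial (Fin n) K) ⧸ I ^ s) →
      I ^ s = (⨅ p ∈ I.minimalPrimes, p ^ s) ⊓ (Ideal.span (X '' A)) ^ (ℓ * s))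

theorem stmt_3 {K : Type*} [Field K] {n : ℕ}
    (I : Ideal (MvPolynomial (Fin n) K))
    (hI : IsWellNearlyNTFType I) :
    ∀ s : ℕ, 1 ≤ s → ∀ d : Fin n →₀ ℕ,
      (∃ k : ℕ, 1 ≤ k ∧ (monomial d (1 : K)) ^ k ∈ I ^ (s * k)) →
      monomial d (1 : K) ∈ I ^ s := by
  obtain ⟨⟨S, hIS⟩, ℓ, m, A, hℓ, hm, h3, h4, h5⟩ := hI
  intro s hs d ⟨k, hk, hmem⟩
  have hrad : I.radical = I := radical_span_prods S I hIS
  have hmin : ∀ P ∈ I.minimalPrimes, ∃ C : Set (Fin n), P = Ideal.span (X '' C) :=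
    fun P hP => minimalPrime_eq_spanX S I hIS hP
  have hfin : I.minimalPrimes.Finite := by
    refine Set.Finite.subset
      (Set.finite_range fun C : Set (Fin n) =>
        Ideal.span (X '' C : Set (MvPolynomial (Fin n) K))) ?_
    intro P hP
    obtain ⟨C, hC⟩ := hmin P hP
    exact ⟨C, hC.symm⟩
  -- the monomial lies in the intersection of s-th powers of minimal primes
  have hJ : monomial d (1 : K) ∈ ⨅ p ∈ I.minimalPrimes, p ^ s := by
    rw [Submodule.mem_iInf]
    intro p
    rw [Submodule.mem_iInf]
    intro hp
    obtain ⟨C, rfl⟩ := hmin p hp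
    have h1 : (monomial d (1 : K)) ^ k
        ∈ (Ideal.span (X '' C : Set (MvPolynomial (Fin n) K))) ^ (s * k) :=
      Ideal.pow_right_mono hp.1.2 (s * k) hmem
    rw [monomial_pow, one_pow] at h1
    have h2 := wdeg_le_of_monomial_mem_pow h1
    rw [wdeg_smul] at h2
    refine monomial_mem_pow_spanX ?_
    have hk0 : 0 < k := hk
    calc s = (s * k) / k := by rw [Nat.mul_div_cancel _ hk0]
      _ ≤ (k * wdeg C d) / k := Nat.div_le_div_right h2
      _ = wdeg C d := by rw [Nat.mul_div_cancel_left _ hk0]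
  by_cases hcase : m + 1 ≤ s ∧ Ideal.span (X '' A) ∈
      associatedPrimes (MvPolynomial (Fin n) K) ((MvPolynomial (Fin n) K) ⧸ I ^ s)
  · have heq := h5 s hcase.1 hcase.2
    rw [heq]
    refine Submodule.mem_inf.mpr ⟨hJ, ?_⟩
    have hIq : I ^ s ≤ (Ideal.span (X '' A : Set (MvPolynomial (Fin n) K))) ^ (ℓ * s) :=
      heq.trans_le inf_le_right
    have h1 : (monomial d (1 : K)) ^ k
        ∈ (Ideal.span (X '' A : Set (MvPolynomial (Fin n) K))) ^ (ℓ * s * k) := by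
      have hle : I ^ (s * k)
          ≤ (Ideal.span (X '' A : Set (MvPolynomial (Fin n) K))) ^ (ℓ * s * k) := by
        rw [pow_mul, pow_mul]
        exact Ideal.pow_right_mono hIq k
      exact hle hmem
    rw [monomial_pow, one_pow] at h1
    have h2 := wdeg_le_of_monomial_mem_pow h1
    rw [wdeg_smul] at h2
    refine monomial_mem_pow_spanX ?_
    have hk0 : 0 < k := hk
    calc ℓ * s = (ℓ * s * k) / k := by rw [Nat.mul_div_cancel _ hk0]
      _ ≤ (k * wdeg A d) / k := Nat.div_le_div_right h2
      _ = wdeg A d := by rw [Nat.mul_div_cancel_left _ hk0]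
  · have hAss : ∀ P : Ideal (MvPolynomial (Fin n) K),
        IsAssociatedPrime P ((MvPolynomial (Fin n) K) ⧸ I ^ s) → P ∈ I.minimalPrimes := by
      intro P hP
      rcases le_or_gt s m with h | h
      · rw [← h3 s hs h]
        exact hP
      · have hms : m + 1 ≤ s := h
        have := h4 s hms hP
        rcases this with h' | h'
        · exact h'
        · exfalso
          rw [Set.mem_singleton_iff] at h'
          subst h'
          exact hcase ⟨hms, hP⟩
    exact aux_inf_pow_le I hrad hfin s hAss hJ
end

section
/- Let K be a field and R = K[x_1,…,x_n]. If a square-free monomial ideal I ⊆ R is of well-nearly normally torsion-free type, then I has the persistence property, that is, Ass(R/I^k) ⊆ Ass(R/I^{k+1}) for all integers k ≥ 1. -/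
open MvPolynomial

section GeneralCommRing

variable {R : Type*} [CommRing R]

/-- Characterization of associated primes of `R ⧸ J` by colon ideals. -/
lemma assocPrimes_mem_iff [IsNoetherianRing R] (J P : Ideal R) :
    P ∈ associatedPrimes R (R ⧸ J) ↔ P.IsPrime ∧ ∃ w : R, ∀ r : R, r ∈ P ↔ r * w ∈ J := by
  constructor
  · intro h
    obtain ⟨hP, x, hx⟩ := isAssociatedPrime_iff.mp h
    obtain ⟨w, rfl⟩ := Ideal.Quotient.mk_surjective x
    refine ⟨hP, w, fun r => ?_⟩
    rw [hx, Submodule.mem_colon_singleton, Submodule.mem_bot, ← Ideal.Quotient.mk_eq_mk,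
      ← Submodule.Quotient.mk_smul, smul_eq_mul, Submodule.Quotient.mk_eq_zero]
  · rintro ⟨hP, w, hw⟩
    refine isAssociatedPrime_iff.mpr ⟨hP, Ideal.Quotient.mk J w, ?_⟩
    ext r
    rw [Submodule.mem_colon_singleton, Submodule.mem_bot, ← Ideal.Quotient.mk_eq_mk,
      ← Submodule.Quotient.mk_smul, smul_eq_mul, Submodule.Quotient.mk_eq_zero]
    exact hw r

lemma assocPrime_ideal_le [IsNoetherianRing R] {J P : Ideal R} (h : P ∈ associatedPrimes R (R ⧸ J)) : J ≤ P := by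
  rw [assocPrimes_mem_iff] at h
  obtain ⟨-, w, hw⟩ := h
  exact fun r hr => (hw r).mpr (Ideal.mul_mem_right w _ hr)

lemma exists_assocPrime_ge [IsNoetherianRing R] {J : Ideal R} {w : R} (hw : w ∉ J) :
    ∃ P ∈ associatedPrimes R (R ⧸ J), ∀ r : R, r * w ∈ J → r ∈ P := by
  have hne : (Ideal.Quotient.mk J) w ≠ 0 := by
    rw [Ne, Ideal.Quotient.eq_zero_iff_mem]; exact hw
  obtain ⟨P, hP, hle⟩ := exists_le_isAssociatedPrime_of_isNoetherianRing R _ hne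
  refine ⟨P, hP, fun r hr => hle ?_⟩
  rw [Submodule.mem_colon_singleton, Submodule.mem_bot, ← Ideal.Quotient.mk_eq_mk,
    ← Submodule.Quotient.mk_smul, smul_eq_mul, Submodule.Quotient.mk_eq_zero]
  exact hr

lemma prime_of_finset_inf_le {p : Ideal R} (hp : p.IsPrime) :
    ∀ t : Finset (Ideal R), t.inf id ≤ p → ∃ Q ∈ t, Q ≤ p := by
  classical
  intro t
  induction t using Finset.induction_on with
  | empty =>
    intro h
    simp only [Finset.inf_empty] at h
    exact absurd (top_le_iff.mp h) hp.ne_top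
  | @insert a s ha ih =>
    intro h
    rw [Finset.inf_insert] at h
    have hmul : a * s.inf id ≤ p := le_trans Ideal.mul_le_inf h
    rcases hp.mul_le.mp hmul with h' | h'
    · exact ⟨a, Finset.mem_insert_self a s, h'⟩
    · obtain ⟨Q, hQ, hQ'⟩ := ih h'
      exact ⟨Q, Finset.mem_insert_of_mem hQ, hQ'⟩

/-- A minimal prime over `J` is an associated prime of `R ⧸ J` (Noetherian case). -/
lemma minimalPrime_mem_assocPrimes [IsNoetherianRing R] {J p : Ideal R}
    (hp : p ∈ J.minimalPrimes) : p ∈ associatedPrimes R (R ⧸ J) := by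
  classical
  obtain ⟨t, htinf, htprim, -, htirr⟩ := Ideal.IsLasker.minimal (Submodule.isLasker R R) J
  have hpp : p.IsPrime := hp.1.1
  obtain ⟨Q, hQt, hQp⟩ := prime_of_finset_inf_le hpp t (le_of_eq_of_le htinf hp.1.2)
  have hQprim : Q.IsPrimary := htprim hQt
  have hJQ : J ≤ Q := htinf ▸ (Finset.inf_le hQt : t.inf id ≤ id Q)
  have hradp : Q.radical = p := by
    have h1 : Q.radical ≤ p := hpp.isRadical.radical_le_iff.mpr hQp
    exact le_antisymm h1
      (hp.2 ⟨Ideal.isPrime_radical hQprim, le_trans hJQ Ideal.le_radical⟩ h1)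
  obtain ⟨x, hxmem, hxQ⟩ := SetLike.not_le_iff_exists.mp (htirr hQt)
  have hcolon : ∀ r : R, r * x ∈ J ↔ r * x ∈ Q := by
    intro r
    rw [← htinf, Submodule.mem_finsetInf]
    constructor
    · intro h; exact h Q hQt
    · intro h Q' hQ't
      by_cases hQQ : Q' = Q
      · rwa [hQQ, id]
      · exact Ideal.mul_mem_left _ r
          (Submodule.mem_finsetInf.mp hxmem Q' (Finset.mem_erase.mpr ⟨hQQ, hQ't⟩))
  have hcolon_le_rad : Q.colon (Ideal.span {x}) ≤ Q.radical := by
    intro r hr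
    rcases (Ideal.isPrimary_iff.mp hQprim).2
      (show x * r ∈ Q by rw [mul_comm]; exact Ideal.mem_colon_span_singleton.mp hr) with h | h
    · exact absurd h hxQ
    · exact h
  have hQ_le_colon : Q ≤ Q.colon (Ideal.span {x}) :=
    fun r hr => Ideal.mem_colon_span_singleton.mpr (Ideal.mul_mem_right x _ hr)
  have hCprimary : (Q.colon (Ideal.span {x})).IsPrimary := by
    rw [Ideal.isPrimary_iff]
    constructor
    · intro h
      apply hxQ
      have h1 : (1 : R) ∈ Q.colon (Ideal.span {x}) := h ▸ Submodule.mem_top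
      simpa using Ideal.mem_colon_span_singleton.mp h1
    · intro a b hab
      rw [Ideal.mem_colon_span_singleton] at hab
      have : (a * x) * b ∈ Q := by
        have : a * b * x = a * x * b := by ring
        rwa [this] at hab
      rcases (Ideal.isPrimary_iff.mp hQprim).2 this with h | h
      · exact Or.inl (Ideal.mem_colon_span_singleton.mpr h)
      · exact Or.inr (Ideal.radical_mono hQ_le_colon h)
  have hCrad : (Q.colon (Ideal.span {x})).radical = p := by
    rw [← hradp]
    refine le_antisymm ?_ (Ideal.radical_mono hQ_le_colon)
    calc (Q.colon (Ideal.span {x})).radical ≤ Q.radical.radical :=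
          Ideal.radical_mono hcolon_le_rad
      _ = Q.radical := Q.radical_idem
  have hpC : p ∈ associatedPrimes R (R ⧸ Q.colon (Ideal.span {x})) := by
    rw [associatedPrimes.eq_singleton_of_isPrimary hCprimary, hCrad]
    rfl
  rw [assocPrimes_mem_iff] at hpC
  obtain ⟨-, w, hw⟩ := hpC
  rw [assocPrimes_mem_iff]
  refine ⟨hpp, w * x, fun r => ?_⟩
  rw [hw, Ideal.mem_colon_span_singleton, ← mul_assoc, hcolon (r * w)]

lemma minimalPrime_pow {J p : Ideal R} {t : ℕ} (ht : 1 ≤ t) (hp : p ∈ J.minimalPrimes) :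
    p ∈ (J ^ t).minimalPrimes := by
  refine ⟨⟨hp.1.1, le_trans (Ideal.pow_le_self (by omega)) hp.1.2⟩, ?_⟩
  rintro q ⟨hq, hq2⟩ hqp
  exact hp.2 ⟨hq, Ideal.IsPrime.le_of_pow_le (hP := hq) hq2⟩ hqp

end GeneralCommRing

section MvPoly

variable {K : Type*} [Field K] {n : ℕ}

open scoped Classical in
/-- The algebra map tracking the `A`-weight of monomials in an auxiliary polynomial variable. -/
noncomputable def psiA (A : Set (Fin n)) :
    MvPolynomial (Fin n) K →ₐ[K] Polynomial (MvPolynomial (Fin n) K) :=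
  aeval fun i => if i ∈ A then Polynomial.C (X i) * Polynomial.X else Polynomial.C (X i)

lemma psiA_eval_one (A : Set (Fin n)) (f : MvPolynomial (Fin n) K) :
    (psiA A f).eval 1 = f := by
  classical
  induction f using MvPolynomial.induction_on with
  | C a => simp [psiA, Polynomial.algebraMap_apply, MvPolynomial.algebraMap_eq]
  | add p q hp hq => simp [map_add, hp, hq]
  | mul_X p i hp =>
    have hX : (psiA (K := K) A (X i)).eval 1 = X i := by
      by_cases h : i ∈ A <;> simp [psiA, h]
    rw [map_mul, Polynomial.eval_mul, hp, hX]

lemma psiA_ne_zero {A : Set (Fin n)} {f : MvPolynomial (Fin n) K} (hf : f ≠ 0) :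
    psiA A f ≠ 0 := fun h => hf (by rw [← psiA_eval_one A f, h, Polynomial.eval_zero])

/-- The ideal of elements of `A`-order at least `j`. -/
noncomputable def MAid (A : Set (Fin n)) (j : ℕ) : Ideal (MvPolynomial (Fin n) K) :=
  (Ideal.span {(Polynomial.X : Polynomial (MvPolynomial (Fin n) K))} ^ j).comap (psiA A)

lemma mem_MAid {A : Set (Fin n)} {j : ℕ} {f : MvPolynomial (Fin n) K} :
    f ∈ MAid A j ↔ ∀ e < j, (psiA A f).coeff e = 0 := by
  rw [MAid, Ideal.mem_comap, Ideal.span_singleton_pow, Ideal.mem_span_singleton]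
  exact Polynomial.X_pow_dvd_iff

lemma mem_MAid_iff_le_ntd {A : Set (Fin n)} {j : ℕ} {f : MvPolynomial (Fin n) K}
    (hf : f ≠ 0) : f ∈ MAid A j ↔ j ≤ (psiA A f).natTrailingDegree := by
  rw [mem_MAid]
  constructor
  · intro h
    exact Polynomial.le_natTrailingDegree (psiA_ne_zero hf) h
  · intro h e he
    exact Polynomial.coeff_eq_zero_of_lt_natTrailingDegree (lt_of_lt_of_le he h)

lemma MAid_mul_le (A : Set (Fin n)) (a b : ℕ) :
    MAid (K := K) A a * MAid A b ≤ MAid A (a + b) := by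
  rw [Ideal.mul_le]
  intro r hr s hs
  rw [MAid, Ideal.mem_comap] at hr hs ⊢
  rw [map_mul, pow_add (M := Ideal (Polynomial (MvPolynomial (Fin n) K)))]
  exact Ideal.mul_mem_mul hr hs

lemma span_le_MAid_one (A : Set (Fin n)) :
    Ideal.span (X '' A : Set (MvPolynomial (Fin n) K)) ≤ MAid A 1 := by
  classical
  rw [Ideal.span_le]
  rintro _ ⟨i, hi, rfl⟩
  rw [SetLike.mem_coe, mem_MAid]
  intro e he
  interval_cases e
  simp [psiA, hi]

lemma spanpow_le_MAid (A : Set (Fin n)) (j : ℕ) :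
    Ideal.span (X '' A : Set (MvPolynomial (Fin n) K)) ^ j ≤ MAid A j := by
  induction j with
  | zero => simp [MAid]
  | succ j ih =>
    calc Ideal.span (X '' A) ^ (j + 1) = Ideal.span (X '' A) ^ j * Ideal.span (X '' A) :=
        pow_succ _ _
      _ ≤ MAid A j * MAid A 1 := Ideal.mul_mono ih (span_le_MAid_one A)
      _ ≤ MAid A (j + 1) := MAid_mul_le A j 1

open scoped Classical in
/-- The `A`-weight of an exponent vector. -/
noncomputable def degA (A : Set (Fin n)) (d : Fin n →₀ ℕ) : ℕ :=
  ∑ i : Fin n, if i ∈ A then d i else 0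

lemma psiA_monomial (A : Set (Fin n)) (d : Fin n →₀ ℕ) (c : K) :
    psiA A (monomial d c) = Polynomial.C (monomial d c) * Polynomial.X ^ degA A d := by
  classical
  rw [monomial_eq, map_mul]
  have hC : psiA (K := K) A (C c) = Polynomial.C (C c) := by
    simp [psiA, MvPolynomial.algebraMap_eq, Polynomial.algebraMap_apply]
  rw [hC, Finsupp.prod, map_prod]
  have hfac : ∀ i ∈ d.support, psiA (K := K) A (X i ^ d i)
      = Polynomial.C (X i ^ d i) * Polynomial.X ^ (if i ∈ A then d i else 0) := by
    intro i _
    by_cases h : i ∈ A <;> simp [psiA, h, mul_pow, map_pow]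
  rw [Finset.prod_congr rfl hfac, Finset.prod_mul_distrib,
    ← map_prod (Polynomial.C :
        MvPolynomial (Fin n) K →+* Polynomial (MvPolynomial (Fin n) K))
      (fun x => X x ^ d x) d.support,
    Finset.prod_pow_eq_pow_sum]
  have hdeg : ∑ i ∈ d.support, (if i ∈ A then d i else 0) = degA A d := by
    rw [degA]
    apply Finset.sum_subset (Finset.subset_univ _)
    intro i _ hi
    simp [Finsupp.notMem_support_iff.mp hi]
  rw [hdeg, map_mul]
  ring

lemma support_degA_ge {A : Set (Fin n)} {j : ℕ} {f : MvPolynomial (Fin n) K}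
    (hf : f ∈ MAid A j) {d : Fin n →₀ ℕ} (hd : d ∈ f.support) : j ≤ degA A d := by
  classical
  by_contra hlt
  push_neg at hlt
  have h0 := mem_MAid.mp hf (degA A d) hlt
  have hsum : psiA (K := K) A f
      = ∑ e ∈ f.support, Polynomial.C (monomial e (coeff e f)) * Polynomial.X ^ degA A e := by
    conv_lhs => rw [f.as_sum]
    rw [map_sum]
    exact Finset.sum_congr rfl fun e _ => psiA_monomial A e (coeff e f)
  rw [hsum, Polynomial.finset_sum_coeff] at h0
  have hterm : ∀ e ∈ f.support,
      (Polynomial.C (monomial e (coeff e f)) * Polynomial.X ^ degA A e).coeff (degA A d)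
      = if degA A d = degA A e then (monomial e (coeff e f) : MvPolynomial (Fin n) K) else 0 := by
    intro e _
    rw [Polynomial.coeff_C_mul, Polynomial.coeff_X_pow]
    by_cases h : degA A d = degA A e
    · rw [if_pos h, if_pos h, mul_one]
    · rw [if_neg h, if_neg h, mul_zero]
  rw [Finset.sum_congr rfl hterm] at h0
  have hcd := congrArg (MvPolynomial.coeff d) h0
  rw [MvPolynomial.coeff_sum] at hcd
  rw [Finset.sum_eq_single d (fun e _ hne => by
      split
      · rw [MvPolynomial.coeff_monomial, if_neg hne]
      · exact MvPolynomial.coeff_zero d) (fun hnd => absurd hd hnd)] at hcd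
  rw [if_pos rfl, MvPolynomial.coeff_monomial, if_pos rfl] at hcd
  exact MvPolynomial.mem_support_iff.mp hd (by simpa using hcd)

lemma monomial_mem_spanpow {A : Set (Fin n)} {d : Fin n →₀ ℕ} {c : K} {j : ℕ}
    (h : j ≤ degA A d) :
    monomial d c ∈ Ideal.span (X '' A : Set (MvPolynomial (Fin n) K)) ^ j := by
  classical
  induction j generalizing d with
  | zero => simp
  | succ j ih =>
    obtain ⟨i, hiA, hdi⟩ : ∃ i, i ∈ A ∧ d i ≠ 0 := by
      by_contra hc
      push_neg at hc
      have hz : degA A d = 0 := by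
        rw [degA]
        apply Finset.sum_eq_zero
        intro i _
        by_cases h' : i ∈ A
        · simp [h', hc i h']
        · simp [h']
      omega
    have hle : Finsupp.single i 1 ≤ d := by
      rw [Finsupp.single_le_iff]
      omega
    have hdd : Finsupp.single i 1 + (d - Finsupp.single i 1) = d := by
      rw [add_tsub_cancel_of_le hle]
    have hmono : (monomial d c : MvPolynomial (Fin n) K)
        = X i * monomial (d - Finsupp.single i 1) c := by
      rw [← hdd, monomial_single_add, pow_one, hdd]
    have hdeg : j ≤ degA A (d - Finsupp.single i 1) := by
      have heq : degA A d = degA A (d - Finsupp.single i 1) + 1 := by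
        rw [degA, degA]
        have hterm : ∀ i' : Fin n, (if i' ∈ A then d i' else 0)
            = (if i' ∈ A then ((d - Finsupp.single i 1) : Fin n →₀ ℕ) i' else 0)
              + (if i' = i then 1 else 0) := by
          intro i'
          have hsub : ((d - Finsupp.single i 1) : Fin n →₀ ℕ) i'
              = d i' - (if i = i' then 1 else 0) := by
            rw [Finsupp.tsub_apply, Finsupp.single_apply]
          by_cases h1 : i' = i
          · subst h1
            rw [hsub, if_pos hiA, if_pos hiA, if_pos rfl]
            omega
          · rw [hsub, if_neg (show ¬(i = i') from fun h => h1 h.symm), Nat.sub_zero,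
              if_neg h1, add_zero]
        rw [Finset.sum_congr rfl fun i' _ => hterm i', Finset.sum_add_distrib]
        simp
      omega
    rw [hmono, pow_succ']
    exact Ideal.mul_mem_mul (Ideal.subset_span ⟨i, hiA, rfl⟩) (ih hdeg)

lemma spanpow_eq_MAid (A : Set (Fin n)) (j : ℕ) :
    Ideal.span (X '' A : Set (MvPolynomial (Fin n) K)) ^ j = MAid A j := by
  refine le_antisymm (spanpow_le_MAid A j) ?_
  intro f hf
  rw [f.as_sum]
  exact Ideal.sum_mem _ fun d hd => monomial_mem_spanpow (support_degA_ge hf hd)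

/-- The span of a set of variables is a prime ideal. -/
lemma span_image_X_isPrime (B : Set (Fin n)) :
    (Ideal.span (X '' B : Set (MvPolynomial (Fin n) K))).IsPrime := by
  classical
  set phi : MvPolynomial (Fin n) K →ₐ[K] MvPolynomial (Fin n) K :=
    aeval fun i => if i ∈ B then 0 else X i with hphi
  have hmem : ∀ f : MvPolynomial (Fin n) K,
      f - phi f ∈ Ideal.span (X '' B : Set (MvPolynomial (Fin n) K)) := by
    intro f
    induction f using MvPolynomial.induction_on with
    | C a => simp [hphi]
    | add p q hp hq =>
      have h' : p + q - phi (p + q) = (p - phi p) + (q - phi q) := by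
        rw [map_add]; ring
      rw [h']
      exact Ideal.add_mem _ hp hq
    | mul_X p i hp =>
      by_cases h : i ∈ B
      · have h' : phi (p * X i) = 0 := by simp [hphi, h]
        rw [h', sub_zero]
        exact Ideal.mul_mem_left _ p (Ideal.subset_span ⟨i, h, rfl⟩)
      · have h' : phi (p * X i) = phi p * X i := by simp [hphi, h]
        rw [h', ← sub_mul]
        exact Ideal.mul_mem_right _ _ hp
  have hker : ∀ f : MvPolynomial (Fin n) K,
      f ∈ Ideal.span (X '' B : Set (MvPolynomial (Fin n) K)) ↔ phi f = 0 := by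
    intro f
    constructor
    · intro hf
      have hsub : Ideal.span (X '' B : Set (MvPolynomial (Fin n) K))
          ≤ RingHom.ker phi.toRingHom := by
        rw [Ideal.span_le]
        rintro _ ⟨i, hi, rfl⟩
        simp [RingHom.mem_ker, hphi, hi]
      exact hsub hf
    · intro hf
      have := hmem f
      rwa [hf, sub_zero] at this
  constructor
  · intro htop
    have h1 : (1 : MvPolynomial (Fin n) K)
        ∈ Ideal.span (X '' B : Set (MvPolynomial (Fin n) K)) := htop ▸ Submodule.mem_top
    rw [hker, map_one] at h1
    exact one_ne_zero h1
  · intro f g hfg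
    rw [hker, map_mul] at hfg
    rcases mul_eq_zero.mp hfg with h | h
    · exact Or.inl ((hker f).mpr h)
    · exact Or.inr ((hker g).mpr h)

/-- Minimal primes of an ideal generated by square-free monomials are variable spans. -/
lemma minimalPrime_eq_span_of_monomial {S : Set (Finset (Fin n))}
    {I : Ideal (MvPolynomial (Fin n) K)}
    (hIS : I = Ideal.span ((fun T => ∏ i ∈ T, (X i : MvPolynomial (Fin n) K)) '' S))
    {p : Ideal (MvPolynomial (Fin n) K)} (hp : p ∈ I.minimalPrimes) :
    ∃ B : Set (Fin n), p = Ideal.span (X '' B) := by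
  classical
  refine ⟨{i | X i ∈ p}, ?_⟩
  haveI hprime : p.IsPrime := hp.1.1
  have hIp := hp.1.2
  have hle : Ideal.span (X '' {i | X i ∈ p}) ≤ p := by
    rw [Ideal.span_le]
    rintro _ ⟨i, hi, rfl⟩
    exact hi
  have hIle : I ≤ Ideal.span (X '' {i | X i ∈ p}) := by
    rw [hIS, Ideal.span_le]
    rintro _ ⟨T, hT, rfl⟩
    have hTp : (∏ i ∈ T, (X i : MvPolynomial (Fin n) K)) ∈ p :=
      hIp (by rw [hIS]; exact Ideal.subset_span ⟨T, hT, rfl⟩)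
    rw [Ideal.IsPrime.prod_mem_iff] at hTp
    obtain ⟨i, hiT, hip⟩ := hTp
    dsimp only
    rw [← Finset.mul_prod_erase _ _ hiT]
    exact Ideal.mul_mem_right _ _ (Ideal.subset_span ⟨i, hip, rfl⟩)
  exact le_antisymm (hp.2 ⟨span_image_X_isPrime _, hIle⟩ hle) hle

end MvPoly

theorem stmt_5 {K : Type*} [Field K] {n : ℕ}
    (I : Ideal (MvPolynomial (Fin n) K))
    (hI : IsWellNearlyNTFType I) :
    ∀ k : ℕ, 1 ≤ k →
      associatedPrimes (MvPolynomial (Fin n) K) ((MvPolynomial (Fin n) K) ⧸ I ^ k) ⊆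
        associatedPrimes (MvPolynomial (Fin n) K) ((MvPolynomial (Fin n) K) ⧸ I ^ (k + 1)) := by
  classical
  obtain ⟨⟨S, hIS⟩, ℓ, m, A, hℓ, hm, h1, h2, h3⟩ := hI
  intro k hk
  by_cases hkm : k + 1 ≤ m
  · rw [h1 (k + 1) (by omega) hkm, h1 k hk (by omega)]
  push_neg at hkm
  by_cases hstab : I ^ (k + 1) = I ^ k
  · rw [hstab]
  intro P hP
  by_cases hPmin : P ∈ I.minimalPrimes
  · exact minimalPrime_mem_assocPrimes (minimalPrime_pow (by omega) hPmin)
  have hkm1 : m + 1 ≤ k := by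
    by_contra hc
    push_neg at hc
    exact hPmin ((h1 k hk (by omega)) ▸ hP)
  have hPq : P = Ideal.span (X '' A) := by
    rcases h2 k hkm1 hP with h | h
    · exact absurd h hPmin
    · exact h
  rw [hPq] at hP hPmin
  rw [hPq]
  set q : Ideal (MvPolynomial (Fin n) K) := Ideal.span (X '' A) with hqdef
  by_contra hqnot
  have hqprime : q.IsPrime := hP.isPrime
  have hIq : I ≤ q := Ideal.IsPrime.le_of_pow_le (hP := hqprime) (assocPrime_ideal_le hP)
  have hdec := h3 k hkm1 hP
  set J : Ideal (MvPolynomial (Fin n) K) := ⨅ p ∈ I.minimalPrimes, p ^ k with hJdef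
  set L := ℓ * k with hLdef
  have hCq : ∀ w : MvPolynomial (Fin n) K,
      (∀ c ∈ q, w * c ∈ I ^ (k + 1)) → w ∈ I ^ (k + 1) := by
    intro w hw
    by_contra hwn
    obtain ⟨P', hP', hle⟩ := exists_assocPrime_ge hwn
    have hqP' : q ≤ P' := fun c hc => hle c (by rw [mul_comm]; exact hw c hc)
    rcases h2 (k + 1) (by omega) hP' with hmin | hsing
    · exact hPmin (((hmin.2 ⟨hqprime, hIq⟩ hqP').antisymm hqP') ▸ hmin)
    · rw [Set.mem_singleton_iff] at hsing
      exact hqnot (hsing ▸ hP')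
  have hT : ∀ j : ℕ, j ≤ L → ∀ z ∈ J, ∀ a ∈ I, ∀ b ∈ q ^ (L - j),
      z * b * a ∈ I ^ (k + 1) := by
    intro j
    induction j with
    | zero =>
      intro _ z hz a ha b hb
      rw [Nat.sub_zero] at hb
      have hzb : z * b ∈ I ^ k := by
        rw [hdec]
        exact Submodule.mem_inf.mpr ⟨Ideal.mul_mem_right b _ hz, Ideal.mul_mem_left _ z hb⟩
      have hmul : z * b * a ∈ I ^ k * I := Ideal.mul_mem_mul hzb ha
      rwa [← pow_succ] at hmul
    | succ j ih =>
      intro hj z hz a ha b hb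
      apply hCq
      intro c hc
      have hbc : b * c ∈ q ^ (L - j) := by
        have hle' : q ^ (L - (j + 1)) * q ≤ q ^ (L - j) := by
          rw [← pow_succ, show L - (j + 1) + 1 = L - j by omega]
        exact hle' (Ideal.mul_mem_mul hb hc)
      have hres := ih (by omega) z hz a ha (b * c) hbc
      have heq : z * (b * c) * a = z * b * a * c := by ring
      rwa [heq] at hres
  have hJI : ∀ z ∈ J, ∀ a ∈ I, z * a ∈ I ^ (k + 1) := by
    intro z hz a ha
    have hres := hT L le_rfl z hz a ha 1
      (by rw [Nat.sub_self, pow_zero, Ideal.one_eq_top]; exact Submodule.mem_top)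
    rwa [mul_one] at hres
  have hIbot : I ≠ ⊥ := by
    rintro rfl
    exact hstab (by rw [← Ideal.zero_eq_bot, zero_pow (show k + 1 ≠ 0 by omega),
      zero_pow (show k ≠ 0 by omega)])
  obtain ⟨u, huI, hune⟩ : ∃ u, u ∈ I ∧ u ≠ (0 : MvPolynomial (Fin n) K) := by
    by_contra hcon
    push_neg at hcon
    exact hIbot ((Submodule.eq_bot_iff I).mpr hcon)
  have hSVne : ((fun f => (psiA (K := K) A f).natTrailingDegree) ''
      {f | f ∈ I ∧ f ≠ 0}).Nonempty := ⟨_, ⟨u, ⟨huI, hune⟩, rfl⟩⟩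
  set t0 := sInf ((fun f => (psiA (K := K) A f).natTrailingDegree) ''
      {f | f ∈ I ∧ f ≠ 0}) with ht0def
  obtain ⟨u0, ⟨hu0I, hu0ne⟩, hu0V⟩ := Nat.sInf_mem hSVne
  have hIMA : I ≤ MAid A t0 := by
    intro f hf
    by_cases hf0 : f = 0
    · rw [hf0]; exact Ideal.zero_mem _
    rw [mem_MAid_iff_le_ntd hf0]
    exact Nat.sInf_le ⟨f, ⟨hf, hf0⟩, rfl⟩
  have hJqL : J ≤ q ^ L := by
    intro z hz
    by_cases hz0 : z = 0
    · rw [hz0]; exact Ideal.zero_mem _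
    have hmul : z * u0 ∈ MAid A (L + t0) := by
      have hzu : z * u0 ∈ I ^ (k + 1) := hJI z hz u0 hu0I
      have hle2 : I ^ (k + 1) ≤ MAid A (L + t0) := by
        calc I ^ (k + 1) = I ^ k * I := pow_succ I k
          _ ≤ q ^ L * MAid A t0 :=
              Ideal.mul_mono (by rw [hdec]; exact inf_le_right) hIMA
          _ ≤ MAid A L * MAid A t0 :=
              Ideal.mul_mono_left (by rw [hqdef]; exact spanpow_le_MAid A L)
          _ ≤ MAid A (L + t0) := MAid_mul_le A L t0
      exact hle2 hzu
    have hzu0 : z * u0 ≠ 0 := mul_ne_zero hz0 hu0ne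
    rw [mem_MAid_iff_le_ntd hzu0, map_mul,
      Polynomial.natTrailingDegree_mul (psiA_ne_zero hz0) (psiA_ne_zero hu0ne)] at hmul
    have hVu0 : (psiA (K := K) A u0).natTrailingDegree = t0 := hu0V
    have hVz : L ≤ (psiA (K := K) A z).natTrailingDegree := by omega
    rw [hqdef, spanpow_eq_MAid, mem_MAid_iff_le_ntd hz0]
    exact hVz
  have hIkJ : I ^ k = J := by
    rw [hdec]
    exact inf_eq_left.mpr hJqL
  obtain ⟨-, x, hx⟩ := (assocPrimes_mem_iff (I ^ k) q).mp hP
  have hxIk : x ∉ I ^ k := by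
    intro hmem
    exact hqprime.ne_top ((Ideal.eq_top_iff_one _).mpr ((hx 1).mpr (by rwa [one_mul])))
  have hxJ : x ∉ J := by rwa [hIkJ] at hxIk
  obtain ⟨p0, hp0min, hxp0⟩ : ∃ p0 ∈ I.minimalPrimes, x ∉ p0 ^ k := by
    by_contra hcon
    push_neg at hcon
    refine hxJ ?_
    rw [hJdef]
    exact (Submodule.mem_iInf _).mpr fun p => (Submodule.mem_iInf _).mpr fun hp => hcon p hp
  obtain ⟨B, hB⟩ := minimalPrime_eq_span_of_monomial hIS hp0min
  have hJp0 : J ≤ p0 ^ k := by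
    rw [hJdef]
    exact iInf₂_le p0 hp0min
  have hx0 : x ≠ 0 := fun h0 => hxp0 (by rw [h0]; exact Ideal.zero_mem _)
  have hxV : (psiA (K := K) B x).natTrailingDegree < k := by
    by_contra hcon
    push_neg at hcon
    exact hxp0 (by rw [hB, spanpow_eq_MAid, mem_MAid_iff_le_ntd hx0]; exact hcon)
  have hqp0 : q ≤ p0 := by
    intro c hc
    by_cases hc0 : c = 0
    · rw [hc0]; exact Ideal.zero_mem _
    have hcx : c * x ∈ p0 ^ k := hJp0 (hIkJ ▸ (hx c).mp hc)
    rw [hB, spanpow_eq_MAid, mem_MAid_iff_le_ntd (mul_ne_zero hc0 hx0), map_mul,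
      Polynomial.natTrailingDegree_mul (psiA_ne_zero hc0) (psiA_ne_zero hx0)] at hcx
    have h1c : 1 ≤ (psiA (K := K) B c).natTrailingDegree := by omega
    have hcmem : c ∈ MAid B 1 := (mem_MAid_iff_le_ntd hc0).mpr h1c
    rw [← spanpow_eq_MAid B 1, pow_one] at hcmem
    rw [hB]
    exact hcmem
  exact hPmin (((hp0min.2 ⟨hqprime, hIq⟩ hqp0).antisymm hqp0) ▸ hp0min)
end

section
/- Let K be a field, R = K[x_1,…,x_n,x_{n+1}], and let I ⊆ R be a monomial ideal none of whose minimal monomial generators is divisible by x_{n+1}. Let 𝔪 = (x_1,…,x_{n+1}). Let g be a minimal monomial generator of I, let f be a monomial of R with f ≠ 1, set h = fg, assume x_{n+1} does not divide h, and let L = x_{n+1}I + hR. If (x_1,…,x_n) ∈ Ass(R/I^t) for some integer t ≥ 1, then 𝔪 ∈ Ass(R/L^{t+1}). -/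
open MvPolynomial

section Aux

variable {K : Type*} [Field K] {n : ℕ}

/-- The isomorphism splitting off the last variable. -/
noncomputable def psiEquiv (K : Type*) [Field K] (n : ℕ) :
    MvPolynomial (Fin (n + 1)) K ≃ₐ[K] Polynomial (MvPolynomial (Fin n) K) :=
  (renameEquiv K (finRotate (n + 1))).trans (MvPolynomial.finSuccEquiv K n)

lemma psi_X_last : psiEquiv K n (X (Fin.last n)) = Polynomial.X := by
  simp [psiEquiv, finRotate_last, finSuccEquiv_X_zero]

lemma psi_X_castSucc (i : Fin n) :
    psiEquiv K n (X (Fin.castSucc i)) = Polynomial.C (X i) := by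
  have h1 : finRotate (n + 1) (Fin.castSucc i) = Fin.succ i := by
    rw [finRotate_succ_apply, Fin.coeSucc_eq_succ]
  simp [psiEquiv, h1, finSuccEquiv_X_succ]

lemma psi_yfree (d : Fin (n + 1) →₀ ℕ) (hd : d (Fin.last n) = 0) :
    ∃ q : MvPolynomial (Fin n) K, psiEquiv K n (monomial d (1 : K)) = Polynomial.C q := by
  induction d using Finsupp.induction with
  | zero =>
      exact ⟨1, by rw [monomial_zero']; simp⟩
  | single_add i b f hif hb ih =>
      have hil : i ≠ Fin.last n := by
        intro h
        subst h
        simp [Finsupp.add_apply, Finsupp.single_eq_same] at hd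
        exact hb hd.1
      have hfl : f (Fin.last n) = 0 := by
        simpa [Finsupp.add_apply, Finsupp.single_apply, hil] using hd
      obtain ⟨q, hq⟩ := ih hfl
      have hxi : ∃ c : MvPolynomial (Fin n) K, psiEquiv K n (X i) = Polynomial.C c := by
        have h0 : finRotate (n + 1) i ≠ 0 := by
          intro h
          apply hil
          apply (finRotate (n + 1)).injective
          rw [h, finRotate_last]
        obtain ⟨j, hj⟩ := Fin.eq_succ_of_ne_zero h0
        refine ⟨X j, ?_⟩
        simp [psiEquiv, hj, finSuccEquiv_X_succ]
      obtain ⟨c, hc⟩ := hxi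
      refine ⟨c ^ b * q, ?_⟩
      have : (monomial (Finsupp.single i b + f) (1 : K)) = X i ^ b * monomial f 1 := by
        rw [X_pow_eq_monomial, monomial_mul, one_mul]
      rw [this, map_mul, map_pow, hc, hq, ← map_pow, ← map_mul]

/-- The maximal ideal generated by all variables. -/
lemma span_range_X_isMaximal (K : Type*) [Field K] (σ : Type*) :
    (Ideal.span (Set.range (X : σ → MvPolynomial σ K))).IsMaximal := by
  have hker : Ideal.span (Set.range (X : σ → MvPolynomial σ K)) =
      RingHom.ker (constantCoeff : MvPolynomial σ K →+* K) := by
    apply le_antisymm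
    · rw [Ideal.span_le]
      rintro p ⟨i, rfl⟩
      simp [RingHom.mem_ker]
    · intro p hp
      have h0 : constantCoeff p = 0 := hp
      have : p ∈ Ideal.span (X '' (Set.univ : Set σ) : Set (MvPolynomial σ K)) := by
        rw [mem_ideal_span_X_image]
        intro m hm
        have hm0 : m ≠ 0 := by
          rintro rfl
          rw [mem_support_iff] at hm
          exact hm (by simpa [constantCoeff_eq] using h0)
        obtain ⟨i, hi⟩ : ∃ i, m i ≠ 0 := by
          by_contra hc
          push_neg at hc
          exact hm0 (Finsupp.ext fun i => hc i)
        exact ⟨i, Set.mem_univ i, hi⟩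
      simpa [Set.image_univ] using this
  rw [hker]
  exact RingHom.ker_isMaximal_of_surjective _ (fun k => ⟨C k, constantCoeff_C _ k⟩)

end Aux

section Key

variable {A : Type*} [CommRing A] (J : Ideal A) (h : A)

/-- Auxiliary family of ideals bounding coefficients of elements of powers of
`(X) * J[X] + (C h)`. -/
noncomputable def DD (s m : ℕ) : Ideal A :=
  Ideal.span {w | ∃ k, k ≤ m ∧ k ≤ s ∧ ∃ z ∈ (J ^ k : Ideal A), w = h ^ (s - k) * z}

lemma DD_top (m : ℕ) (w : A) : w ∈ DD J h 0 m := by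
  apply Ideal.subset_span
  exact ⟨0, Nat.zero_le _, le_rfl, w, by simp, by simp⟩

lemma DD_mono (s : ℕ) {m m' : ℕ} (hmm : m ≤ m') : DD J h s m ≤ DD J h s m' :=
  Ideal.span_mono (by rintro w ⟨k, hk1, hk2, z, hz, rfl⟩; exact ⟨k, hk1.trans hmm, hk2, z, hz, rfl⟩)

lemma DD_mul_h (s m : ℕ) {x : A} (hx : x ∈ DD J h s m) : h * x ∈ DD J h (s + 1) m := by
  refine Submodule.span_induction ?_ (by simp) ?_ ?_ hx
  · rintro w ⟨k, hk1, hk2, z, hz, rfl⟩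
    apply Ideal.subset_span
    refine ⟨k, hk1, hk2.trans (Nat.le_succ s), z, hz, ?_⟩
    rw [← mul_assoc, ← pow_succ']
    congr 2
    omega
  · intro x y _ _ hx hy
    rw [mul_add]; exact Ideal.add_mem _ hx hy
  · intro r x _ hx
    rw [smul_eq_mul, mul_left_comm]
    exact Ideal.mul_mem_left _ _ hx

lemma DD_mul_J (s m : ℕ) {c x : A} (hc : c ∈ J) (hx : x ∈ DD J h s m) :
    c * x ∈ DD J h (s + 1) (m + 1) := by
  refine Submodule.span_induction ?_ (by simp) ?_ ?_ hx
  · rintro w ⟨k, hk1, hk2, z, hz, rfl⟩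
    apply Ideal.subset_span
    refine ⟨k + 1, by omega, by omega, c * z, ?_, ?_⟩
    · rw [pow_succ, mul_comm c z]
      exact Ideal.mul_mem_mul hz hc
    · have hnat : s + 1 - (k + 1) = s - k := by omega
      rw [hnat]
      ring
  · intro x y _ _ hx hy
    rw [mul_add]; exact Ideal.add_mem _ hx hy
  · intro r x _ hx
    rw [smul_eq_mul, mul_left_comm]
    exact Ideal.mul_mem_left _ _ hx

lemma keyP (s : ℕ) :
    ∀ m : ℕ, ∀ p ∈ (Ideal.span {(Polynomial.X : Polynomial A)} * Ideal.map (Polynomial.C : A →+* Polynomial A) J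
      + Ideal.span {Polynomial.C h}) ^ s, p.coeff m ∈ DD J h s m := by
  induction s with
  | zero => intro m p _; exact DD_top J h m _
  | succ s ih =>
      intro m p hp
      rw [pow_succ] at hp
      refine Submodule.mul_induction_on hp ?_ ?_
      · intro i hi q hq
        rw [Polynomial.coeff_mul]
        apply Ideal.sum_mem
        rintro ⟨j, j'⟩ hjj
        rw [Finset.HasAntidiagonal.mem_antidiagonal] at hjj
        -- q ∈ L' : decompose
        rw [Ideal.add_eq_sup, Submodule.mem_sup] at hq
        obtain ⟨q1, hq1, q2, hq2, rfl⟩ := hq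
        obtain ⟨z, hz, rfl⟩ := Ideal.mem_span_singleton_mul.mp hq1
        obtain ⟨r, rfl⟩ := Ideal.mem_span_singleton.mp hq2
        simp only [Polynomial.coeff_add]
        rw [mul_add]
        apply Ideal.add_mem
        · -- term with X * z
          rcases j' with _ | j''
          · simp [Polynomial.mul_coeff_zero]
          · rw [Polynomial.coeff_X_mul]
            have hcz : z.coeff j'' ∈ J := Ideal.mem_map_C_iff.mp hz j''
            have := DD_mul_J J h s j (hcz) (ih j i hi)
            rw [mul_comm]
            exact DD_mono J h (s + 1) (by omega) this
        · -- term with C h * r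
          rw [Polynomial.coeff_C_mul]
          have : h * (r.coeff j' * i.coeff j) ∈ DD J h (s + 1) j :=
            DD_mul_h J h s j (Ideal.mul_mem_left _ _ (ih j i hi))
          have h2 : i.coeff j * (h * r.coeff j') = h * (r.coeff j' * i.coeff j) := by ring
          rw [h2]
          exact DD_mono J h (s + 1) (by omega) this
      · intro x y hx hy
        rw [Polynomial.coeff_add]
        exact Ideal.add_mem _ hx hy

lemma DD_le (hJ : h ∈ J) (t : ℕ) : DD J h (t + 1) t ≤ Ideal.span {h} * J ^ t := by
  rw [DD, Ideal.span_le]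
  rintro w ⟨k, hk1, hk2, z, hz, rfl⟩
  have : h ^ (t + 1 - k) * z = h * (h ^ (t - k) * z) := by
    rw [← mul_assoc, ← pow_succ']
    congr 2
    omega
  rw [this]
  apply Ideal.mul_mem_mul (Ideal.mem_span_singleton_self h)
  have : (J : Ideal A) ^ t = J ^ (t - k) * J ^ k := by
    rw [← pow_add]
    congr 1
    omega
  rw [this]
  exact Ideal.mul_mem_mul (Ideal.pow_mem_pow hJ _) hz

end Key

theorem stmt_6 {K : Type*} [Field K] {n : ℕ}
    (I : Ideal (MvPolynomial (Fin (n + 1)) K))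
    -- `I` is a monomial ideal none of whose generators is divisible by `x_{n+1}`:
    (hI : ∃ S : Set (Fin (n + 1) →₀ ℕ), (∀ d ∈ S, d (Fin.last n) = 0) ∧
      I = Ideal.span ((fun d => (monomial d (1 : K))) '' S))
    -- `g = monomial e 1` is a minimal monomial generator of `I`:
    (e : Fin (n + 1) →₀ ℕ)
    (hgI : monomial e (1 : K) ∈ I)
    (hgmin : ∀ e' : Fin (n + 1) →₀ ℕ, monomial e' (1 : K) ∈ I → e' ≤ e → e' = e)
    -- `f = monomial a 1 ≠ 1`, `h = f * g`, and `x_{n+1}` does not divide `h`: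
    (a : Fin (n + 1) →₀ ℕ) (ha : a ≠ 0)
    (hh : (a + e) (Fin.last n) = 0)
    (L : Ideal (MvPolynomial (Fin (n + 1)) K))
    (hL : L = Ideal.span {X (Fin.last n)} * I + Ideal.span {monomial (a + e) (1 : K)})
    (t : ℕ) (ht : 1 ≤ t)
    (hass : Ideal.span (Set.range fun i : Fin n => (X (Fin.castSucc i) : MvPolynomial (Fin (n + 1)) K)) ∈
      associatedPrimes (MvPolynomial (Fin (n + 1)) K)
        ((MvPolynomial (Fin (n + 1)) K) ⧸ I ^ t)) :
    Ideal.span (Set.range (X : Fin (n + 1) → MvPolynomial (Fin (n + 1)) K)) ∈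
      associatedPrimes (MvPolynomial (Fin (n + 1)) K)
        ((MvPolynomial (Fin (n + 1)) K) ⧸ L ^ (t + 1)) := by
  classical
  obtain ⟨S, hS0, hSI⟩ := hI
  set ψ := psiEquiv K n with hψ
  -- membership transfer along ψ
  have hmem : ∀ (V : Ideal (MvPolynomial (Fin (n + 1)) K)) (q : MvPolynomial (Fin (n + 1)) K),
      q ∈ V ↔ ψ q ∈ V.map ψ := by
    intro V q
    constructor
    · exact fun h => Ideal.mem_map_of_mem _ h
    · intro h
      rw [Ideal.mem_map_iff_of_surjective ψ ψ.surjective] at h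
      obtain ⟨x, hx, hxq⟩ := h
      rwa [← ψ.injective hxq]
  -- the ideal J in the smaller polynomial ring
  set J : Ideal (MvPolynomial (Fin n) K) :=
    Ideal.span {q | ∃ d ∈ S, ψ (monomial d (1 : K)) = Polynomial.C q} with hJ
  have hmapI : Ideal.map ψ I = Ideal.map (Polynomial.C : _ →+* _) J := by
    rw [hSI, Ideal.map_span, hJ, Ideal.map_span]
    congr 1
    ext p
    constructor
    · rintro ⟨_, ⟨d, hd, rfl⟩, rfl⟩
      obtain ⟨q, hq⟩ := psi_yfree (K := K) d (hS0 d hd)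
      exact ⟨q, ⟨d, hd, hq⟩, hq.symm⟩
    · rintro ⟨q, ⟨d, hd, hq⟩, rfl⟩
      exact ⟨monomial d 1, ⟨d, hd, rfl⟩, hq⟩
  have hmapIt : Ideal.map ψ (I ^ t) = Ideal.map (Polynomial.C : _ →+* _) (J ^ t) := by
    rw [Ideal.map_pow, Ideal.map_pow, hmapI]
  -- the element h'' with ψ (monomial (a+e) 1) = C h''
  obtain ⟨h'', hh''⟩ := psi_yfree (K := K) (a + e) hh
  have haL : a (Fin.last n) = 0 := by
    have := hh
    rw [Finsupp.add_apply] at this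
    omega
  have hmonoI : monomial (a + e) (1 : K) ∈ I := by
    have hsplit : monomial (a + e) (1 : K) = monomial a 1 * monomial e 1 := by
      rw [monomial_mul, one_mul]
    rw [hsplit]
    exact Ideal.mul_mem_left _ _ hgI
  have hmononz : monomial (a + e) (1 : K) ≠ 0 := by
    simp [MvPolynomial.monomial_eq_zero]
  have hh''ne : h'' ≠ 0 := by
    intro h0
    apply hmononz
    apply ψ.injective
    rw [hh'', h0]
    simp
  have hhJ : h'' ∈ J := by
    have h1 : Polynomial.C h'' ∈ Ideal.map (Polynomial.C : _ →+* _) J := by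
      rw [← hh'', ← hmapI]
      exact Ideal.mem_map_of_mem _ hmonoI
    simpa using Ideal.mem_map_C_iff.mp h1 0
  -- the witness for the hypothesis
  have hcol : ∀ (V : Ideal (MvPolynomial (Fin (n + 1)) K)) (y : MvPolynomial (Fin (n + 1)) K ⧸ V),
      (⊥ : Submodule (MvPolynomial (Fin (n + 1)) K) (MvPolynomial (Fin (n + 1)) K ⧸ V)).colon {y} = (Submodule.span (MvPolynomial (Fin (n + 1)) K) {y}).annihilator := by
    intro V y
    ext r
    rw [Submodule.mem_colon_singleton, Submodule.mem_bot, Submodule.mem_annihilator_span_singleton]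
  obtain ⟨hPg, x, hx⟩ := isAssociatedPrime_iff.mp hass
  rw [hcol] at hx
  obtain ⟨u₀, rfl⟩ := Ideal.Quotient.mk_surjective x
  have hsmul : ∀ (V : Ideal (MvPolynomial (Fin (n + 1)) K)) (r q : MvPolynomial (Fin (n + 1)) K),
      r • (Ideal.Quotient.mk V q) = Ideal.Quotient.mk V (r * q) := by
    intro V r q
    rfl
  have hu₀ : u₀ ∉ I ^ t := by
    intro hc
    apply hPg.ne_top
    rw [Ideal.eq_top_iff_one, hx, Submodule.mem_annihilator_span_singleton, one_smul]
    exact (Ideal.Quotient.eq_zero_iff_mem).mpr hc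
  have hXu₀ : ∀ i : Fin n, X (Fin.castSucc i) * u₀ ∈ I ^ t := by
    intro i
    have h1 : (X (Fin.castSucc i) : MvPolynomial (Fin (n + 1)) K) ∈
        Ideal.span (Set.range fun i : Fin n => (X (Fin.castSucc i) : MvPolynomial (Fin (n + 1)) K)) :=
      Ideal.subset_span ⟨i, rfl⟩
    rw [hx, Submodule.mem_annihilator_span_singleton, hsmul] at h1
    exact (Ideal.Quotient.eq_zero_iff_mem).mp h1
  -- extract a good coefficient
  have hexk : ∃ k, (ψ u₀).coeff k ∉ J ^ t := by
    by_contra hc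
    push_neg at hc
    have h1 : ψ u₀ ∈ Ideal.map (Polynomial.C : _ →+* _) (J ^ t) := Ideal.mem_map_C_iff.mpr hc
    rw [← hmapIt] at h1
    exact hu₀ ((hmem (I ^ t) u₀).mpr h1)
  obtain ⟨k0, hk0⟩ := hexk
  set u'' := (ψ u₀).coeff k0 with hu''
  have hXu'' : ∀ i : Fin n, X i * u'' ∈ J ^ t := by
    intro i
    have h1 : ψ (X (Fin.castSucc i) * u₀) ∈ Ideal.map ψ (I ^ t) :=
      Ideal.mem_map_of_mem _ (hXu₀ i)
    rw [hmapIt] at h1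
    have h2 := Ideal.mem_map_C_iff.mp h1 k0
    rwa [map_mul, psi_X_castSucc, Polynomial.coeff_C_mul] at h2
  set u' := ψ.symm (Polynomial.C u'') with hu'
  have hpsiu' : ψ u' = Polynomial.C u'' := ψ.apply_symm_apply _
  have hXu' : ∀ i : Fin n, X (Fin.castSucc i) * u' ∈ I ^ t := by
    intro i
    rw [hmem (I ^ t), map_mul, psi_X_castSucc, hpsiu', ← map_mul, hmapIt]
    exact Ideal.mem_map_of_mem _ (hXu'' i)
  -- the witness
  set w := X (Fin.last n) ^ t * (monomial (a + e) (1 : K) * u') with hw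
  have hyIL : Ideal.span {(X (Fin.last n) : MvPolynomial (Fin (n + 1)) K)} * I ≤ L := by
    rw [hL, Ideal.add_eq_sup]
    exact le_sup_left
  have hhL : monomial (a + e) (1 : K) ∈ L := by
    rw [hL, Ideal.add_eq_sup]
    exact Submodule.mem_sup_right (Ideal.mem_span_singleton_self _)
  have hwi : ∀ i : Fin n, X (Fin.castSucc i) * w ∈ L ^ (t + 1) := by
    intro i
    have h1 : X (Fin.last n) ^ t * (X (Fin.castSucc i) * u') ∈
        (Ideal.span {(X (Fin.last n) : MvPolynomial (Fin (n + 1)) K)} * I) ^ t := by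
      rw [mul_pow, Ideal.span_singleton_pow]
      exact Ideal.mul_mem_mul (Ideal.mem_span_singleton_self _) (hXu' i)
    have h2 := Ideal.pow_right_mono hyIL t h1
    have h3 := Ideal.mul_mem_mul h2 hhL
    rw [← pow_succ] at h3
    have heq : X (Fin.castSucc i) * w =
        X (Fin.last n) ^ t * (X (Fin.castSucc i) * u') * monomial (a + e) (1 : K) := by
      rw [hw]; ring
    rw [heq]
    exact h3
  -- h * u' ∈ I^(t+1)
  have hne : monomial (a + e) (1 : K) * u' ∈ I ^ (t + 1) := by
    obtain ⟨j, hj⟩ : ∃ j, a j ≠ 0 := by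
      by_contra hc
      push_neg at hc
      exact ha (Finsupp.ext fun i => hc i)
    have hjl : j ≠ Fin.last n := fun hc => hj (hc ▸ haL)
    obtain ⟨j', hj'⟩ : ∃ j', Fin.castSucc j' = j := by
      rcases Fin.eq_castSucc_or_eq_last j with ⟨j', hj'⟩ | hc
      · exact ⟨j', hj'.symm⟩
      · exact absurd hc hjl
    have hXj : X j * u' ∈ I ^ t := hj' ▸ hXu' j'
    have hXmono : (X j : MvPolynomial (Fin (n + 1)) K) = monomial (Finsupp.single j 1) 1 := by
      rw [← X_pow_eq_monomial, pow_one]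
    have hdecomp : monomial (a + e) (1 : K) =
        monomial (a - Finsupp.single j 1) 1 * monomial e 1 * X j := by
      have hexp : a - Finsupp.single j 1 + e + Finsupp.single j 1 = a + e := by
        ext i
        simp only [Finsupp.add_apply, Finsupp.tsub_apply, Finsupp.single_apply]
        split_ifs with hij
        · subst hij
          omega
        · omega
      rw [hXmono, monomial_mul, monomial_mul, one_mul, one_mul, hexp]
    have h1 : monomial e (1 : K) * (X j * u') ∈ I ^ (t + 1) := by
      rw [pow_succ']
      exact Ideal.mul_mem_mul hgI hXj
    have heq : monomial (a + e) (1 : K) * u' =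
        monomial (a - Finsupp.single j 1) 1 * (monomial e 1 * (X j * u')) := by
      rw [hdecomp]; ring
    rw [heq]
    exact Ideal.mul_mem_left _ _ h1
  have hwlast : X (Fin.last n) * w ∈ L ^ (t + 1) := by
    have h1 : X (Fin.last n) ^ (t + 1) * (monomial (a + e) (1 : K) * u') ∈
        (Ideal.span {(X (Fin.last n) : MvPolynomial (Fin (n + 1)) K)} * I) ^ (t + 1) := by
      rw [mul_pow, Ideal.span_singleton_pow]
      exact Ideal.mul_mem_mul (Ideal.mem_span_singleton_self _) hne
    have h2 := Ideal.pow_right_mono hyIL (t + 1) h1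
    have heq : X (Fin.last n) * w =
        X (Fin.last n) ^ (t + 1) * (monomial (a + e) (1 : K) * u') := by
      rw [hw]; ring
    rw [heq]
    exact h2
  -- w ∉ L^(t+1)
  have hwnot : w ∉ L ^ (t + 1) := by
    intro hwin
    have h1 : ψ w ∈ (Ideal.map ψ L) ^ (t + 1) := by
      rw [← Ideal.map_pow]
      exact Ideal.mem_map_of_mem _ hwin
    have hmapL : Ideal.map ψ L =
        Ideal.span {(Polynomial.X : Polynomial (MvPolynomial (Fin n) K))} *
          Ideal.map (Polynomial.C : _ →+* _) J + Ideal.span {Polynomial.C h''} := by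
      rw [hL, Ideal.add_eq_sup, Ideal.map_sup, Ideal.map_mul, Ideal.map_span, Ideal.map_span,
        Set.image_singleton, Set.image_singleton, hmapI, Ideal.add_eq_sup]
      congr 2
      · rw [psi_X_last]
      · rw [hh'']
    rw [hmapL] at h1
    have h2 := keyP J h'' (t + 1) t (ψ w) h1
    have h3 : ψ w = Polynomial.X ^ t * Polynomial.C (h'' * u'') := by
      rw [hw, map_mul, map_mul, map_pow, psi_X_last, hh'', hpsiu', ← map_mul]
    rw [h3, mul_comm, Polynomial.C_mul_X_pow_eq_monomial, Polynomial.coeff_monomial,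
      if_pos rfl] at h2
    have h4 := DD_le J h'' hhJ t h2
    obtain ⟨z, hz, hzz⟩ := Ideal.mem_span_singleton_mul.mp h4
    have h5 : u'' = z := mul_left_cancel₀ hh''ne hzz.symm
    exact hk0 (h5 ▸ hz)
  -- assemble
  have hmax := span_range_X_isMaximal K (Fin (n + 1))
  refine isAssociatedPrime_iff.mpr ⟨hmax.isPrime, Ideal.Quotient.mk (L ^ (t + 1)) w, ?_⟩
  rw [hcol]
  have hle : Ideal.span (Set.range (X : Fin (n + 1) → MvPolynomial (Fin (n + 1)) K)) ≤
      (Submodule.span _ {(Ideal.Quotient.mk (L ^ (t + 1)) w)}).annihilator := by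
    rw [Ideal.span_le]
    rintro p ⟨i, rfl⟩
    rw [SetLike.mem_coe, Submodule.mem_annihilator_span_singleton, hsmul,
      Ideal.Quotient.eq_zero_iff_mem]
    rcases Fin.eq_castSucc_or_eq_last i with ⟨j, rfl⟩ | rfl
    · exact hwi j
    · exact hwlast
  have hne_top : (Submodule.span (MvPolynomial (Fin (n + 1)) K) {(Ideal.Quotient.mk (L ^ (t + 1)) w)}).annihilator ≠ ⊤ := by
    intro hc
    apply hwnot
    have h1 : (1 : MvPolynomial (Fin (n + 1)) K) ∈
        (Submodule.span (MvPolynomial (Fin (n + 1)) K) {(Ideal.Quotient.mk (L ^ (t + 1)) w)}).annihilator := by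
      rw [hc]; trivial
    rw [Submodule.mem_annihilator_span_singleton, one_smul,
      Ideal.Quotient.eq_zero_iff_mem] at h1
    exact h1
  exact hmax.eq_of_le hne_top hle
end

section
/- Let G be a finite connected simple graph and let H = C(G) be the cone over G, obtained by adding a new vertex w to G and joining w to every vertex of G. Let R_G = K[x_v : v ∈ V(G)] and R_H = K[x_v : v ∈ V(H)] be polynomial rings over a field K, and let J(G) ⊆ R_G and J(H) ⊆ R_H be the cover ideals of G and H. If the prime ideal (x_v : v ∈ V(G)) belongs to Ass(R_G/J(G)^t) for some integer t ≥ 1, then the prime ideal (x_v : v ∈ V(H)) belongs to Ass(R_H/J(H)^{t+1}). -/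
open MvPolynomial

/-- The cone over a simple graph `G`: add a new vertex (`none`) joined to every vertex of `G`. -/
def cone {V : Type*} (G : SimpleGraph V) : SimpleGraph (Option V) where
  Adj a b := a ≠ b ∧ ∀ u v : V, a = some u → b = some v → G.Adj u v
  symm := by
    constructor
    rintro a b ⟨hne, h⟩
    exact ⟨hne.symm, fun u v hb ha => (h v u ha hb).symm⟩
  loopless := by
    constructor
    rintro a ⟨hne, -⟩
    exact hne rfl

/-- The cover ideal `J(G) = ⋂_{{u,v} ∈ E(G)} (x_u, x_v)` of a simple graph. -/
noncomputable def coverIdeal {V : Type*} (K : Type*) [Field K] (G : SimpleGraph V) :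
    Ideal (MvPolynomial V K) :=
  ⨅ (u : V) (v : V) (_ : G.Adj u v), Ideal.span {X u, X v}

namespace Stmt8

variable {V K : Type*} [Field K]

lemma mem_coverIdeal_iff {G : SimpleGraph V} {p : MvPolynomial V K} :
    p ∈ coverIdeal K G ↔ ∀ u v : V, G.Adj u v → p ∈ Ideal.span {X u, X v} := by
  simp [coverIdeal, Ideal.mem_iInf]

lemma mem_span_pair_of_dvd_left {p a b : MvPolynomial V K} (h : a ∣ p) :
    p ∈ Ideal.span ({a, b} : Set (MvPolynomial V K)) := by
  obtain ⟨c, rfl⟩ := h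
  exact Ideal.mem_span_pair.2 ⟨c, 0, by ring⟩

lemma mem_span_pair_of_dvd_right {p a b : MvPolynomial V K} (h : b ∣ p) :
    p ∈ Ideal.span ({a, b} : Set (MvPolynomial V K)) := by
  obtain ⟨c, rfl⟩ := h
  exact Ideal.mem_span_pair.2 ⟨0, c, by ring⟩

lemma prod_X_eq_monomial (s : Finset V) :
    (∏ v ∈ s, (X v : MvPolynomial V K)) =
      monomial (∑ v ∈ s, Finsupp.single v 1) (1 : K) := by
  classical
  induction s using Finset.induction_on with
  | empty => simp
  | insert _ _ hx ih =>
      rw [Finset.prod_insert hx, Finset.sum_insert hx, ih, X, monomial_mul, one_mul]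

lemma span_range_X_eq_ker {σ : Type*} :
    Ideal.span (Set.range (X : σ → MvPolynomial σ K)) =
      RingHom.ker (constantCoeff : MvPolynomial σ K →+* K) := by
  apply le_antisymm
  · rw [Ideal.span_le]
    rintro - ⟨i, rfl⟩
    simp [RingHom.mem_ker]
  · intro p hp
    rw [← Set.image_univ]
    rw [RingHom.mem_ker] at hp
    refine mem_ideal_span_X_image.2 fun m hm => ?_
    by_contra hc
    push_neg at hc
    have hm0 : m = 0 := Finsupp.ext fun i => by simpa using hc i trivial
    rw [mem_support_iff] at hm
    exact hm (by simpa [hm0, ← constantCoeff_eq] using hp)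

lemma span_range_X_isMaximal {σ : Type*} :
    (Ideal.span (Set.range (X : σ → MvPolynomial σ K))).IsMaximal := by
  rw [span_range_X_eq_ker]
  exact RingHom.ker_isMaximal_of_surjective _ (fun k => ⟨C k, by simp⟩)



lemma X_dvd_iff_mem_span {v : V} {c : MvPolynomial V K} :
    (X v : MvPolynomial V K) ∣ c ↔
      ∀ m ∈ c.support, Finsupp.single v 1 ≤ m := by
  classical
  rw [← Ideal.mem_span_singleton]
  have : ({(X v : MvPolynomial V K)} : Set (MvPolynomial V K)) =
      (fun s => monomial s (1 : K)) '' {Finsupp.single v 1} := by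
    simp [X]
  rw [this, mem_ideal_span_monomial_image]
  simp

variable [Fintype V]

lemma prod_X_dvd {c : MvPolynomial V K} (h : ∀ v : V, (X v : MvPolynomial V K) ∣ c) :
    (∏ v : V, (X v : MvPolynomial V K)) ∣ c := by
  classical
  rw [← Ideal.mem_span_singleton, prod_X_eq_monomial]
  have : ({(monomial (∑ v : V, Finsupp.single v 1) (1:K) : MvPolynomial V K)} :
      Set (MvPolynomial V K)) =
      (fun s => monomial s (1 : K)) '' {∑ v : V, Finsupp.single v 1} := by simp
  rw [this, mem_ideal_span_monomial_image]
  intro m hm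
  refine ⟨_, rfl, ?_⟩
  intro a
  have h2 : ∀ v : V, Finsupp.single v 1 ≤ m := fun v => X_dvd_iff_mem_span.1 (h v) m hm
  have h3 : (∑ v : V, Finsupp.single v (1:ℕ)) a = 1 := by
    rw [Finset.sum_apply']
    rw [Finset.sum_eq_single a (fun b _ hb => Finsupp.single_eq_of_ne' hb)
      (fun ha => absurd (Finset.mem_univ a) ha)]
    simp
  rw [h3]
  simpa using (h2 a) a

lemma prod_X_ne_zero : (∏ v : V, (X v : MvPolynomial V K)) ≠ 0 := by
  rw [prod_X_eq_monomial]
  intro hc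
  simpa using hc


section GraphSide
variable {V K : Type*} [Field K] [Fintype V] {G : SimpleGraph V}

lemma coverIdeal_prod_X_mem : (∏ v : V, (X v : MvPolynomial V K)) ∈ coverIdeal K G := by
  refine mem_coverIdeal_iff.2 fun u v _ => ?_
  exact mem_span_pair_of_dvd_left (Finset.dvd_prod_of_mem _ (Finset.mem_univ u))

lemma coverIdeal_erase_prod_mem [DecidableEq V] (v0 : V) :
    (∏ v ∈ Finset.univ.erase v0, (X v : MvPolynomial V K)) ∈ coverIdeal K G := by
  classical
  refine mem_coverIdeal_iff.2 fun u v huv => ?_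
  rcases ne_or_eq u v0 with hu | rfl
  · exact mem_span_pair_of_dvd_left
      (Finset.dvd_prod_of_mem _ (Finset.mem_erase.2 ⟨hu, Finset.mem_univ u⟩))
  · exact mem_span_pair_of_dvd_right
      (Finset.dvd_prod_of_mem _ (Finset.mem_erase.2 ⟨(G.ne_of_adj huv).symm, Finset.mem_univ v⟩))

/-- Key claim: if `X v * f ∈ J^t` for all `v`, then `P * f ∈ J^(t+1)`. -/
lemma prod_X_mul_mem (hG : G.Connected) {f : MvPolynomial V K} {t : ℕ}
    (hf : ∀ v : V, (X v) * f ∈ (coverIdeal K G) ^ t) :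
    (∏ v : V, (X v : MvPolynomial V K)) * f ∈ (coverIdeal K G) ^ (t + 1) := by
  classical
  obtain ⟨v0⟩ := hG.nonempty
  have hP : (∏ v : V, (X v : MvPolynomial V K)) * f
      = ((X v0) * f) * ∏ v ∈ Finset.univ.erase v0, (X v : MvPolynomial V K) := by
    rw [← Finset.mul_prod_erase (Finset.univ) _ (Finset.mem_univ v0)]
    ring
  rw [hP, pow_succ]
  exact Ideal.mul_mem_mul (hf v0) (coverIdeal_erase_prod_mem v0)

lemma cone_adj_some_some {u v : V} (h : (cone G).Adj (some u) (some v)) : G.Adj u v :=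
  h.2 u v rfl rfl

lemma cone_adj_cases {a b : Option V} (h : (cone G).Adj a b) :
    (∃ u v : V, a = some u ∧ b = some v ∧ G.Adj u v) ∨
    (∃ v : V, a = none ∧ b = some v) ∨ (∃ u : V, a = some u ∧ b = none) := by
  match a, b with
  | none, none => exact absurd rfl h.1
  | none, some v => exact Or.inr (Or.inl ⟨v, rfl, rfl⟩)
  | some u, none => exact Or.inr (Or.inr ⟨u, rfl, rfl⟩)
  | some u, some v => exact Or.inl ⟨u, v, rfl, rfl, h.2 u v rfl rfl⟩

/-- the product of all `X (some v)` lies in the cover ideal of the cone. -/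
lemma PS_mem_coverIdeal_cone :
    (∏ v : V, (X (some v) : MvPolynomial (Option V) K)) ∈ coverIdeal K (cone G) := by
  refine mem_coverIdeal_iff.2 fun a b hab => ?_
  rcases cone_adj_cases hab with ⟨u, v, rfl, rfl, -⟩ | ⟨v, rfl, rfl⟩ | ⟨u, rfl, rfl⟩
  · exact mem_span_pair_of_dvd_left (Finset.dvd_prod_of_mem _ (Finset.mem_univ u))
  · exact mem_span_pair_of_dvd_right (Finset.dvd_prod_of_mem _ (Finset.mem_univ v))
  · exact mem_span_pair_of_dvd_left (Finset.dvd_prod_of_mem _ (Finset.mem_univ u))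

lemma xw_mul_rename_mem {q : MvPolynomial V K} (hq : q ∈ coverIdeal K G) :
    (X none) * (rename some q : MvPolynomial (Option V) K) ∈ coverIdeal K (cone G) := by
  refine mem_coverIdeal_iff.2 fun a b hab => ?_
  rcases cone_adj_cases hab with ⟨u, v, rfl, rfl, huv⟩ | ⟨v, rfl, rfl⟩ | ⟨u, rfl, rfl⟩
  · have hq2 : q ∈ Ideal.span ({X u, X v} : Set (MvPolynomial V K)) :=
      mem_coverIdeal_iff.1 hq u v huv
    obtain ⟨s1, s2, hs⟩ := Ideal.mem_span_pair.1 hq2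
    have : (rename some q : MvPolynomial (Option V) K)
        = rename some s1 * X (some u) + rename some s2 * X (some v) := by
      rw [← hs]; simp [map_add, map_mul]
    refine Ideal.mul_mem_left _ _ ?_
    rw [this]
    exact Ideal.mem_span_pair.2 ⟨rename some s1, rename some s2, rfl⟩
  · exact Ideal.mul_mem_right _ _ (Ideal.mem_span_pair.2 ⟨1, 0, by ring⟩)
  · exact Ideal.mul_mem_right _ _ (Ideal.mem_span_pair.2 ⟨0, 1, by ring⟩)

lemma xw_pow_mul_rename_mem_pow :
    ∀ (n : ℕ) (q : MvPolynomial V K), q ∈ (coverIdeal K G) ^ n →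
      (X none : MvPolynomial (Option V) K) ^ n * rename some q ∈
        (coverIdeal K (cone G)) ^ n := by
  intro n
  induction n with
  | zero => intro q _; simp
  | succ n ih =>
      intro q hq
      rw [pow_succ] at hq ⊢
      refine Submodule.mul_induction_on hq (fun a ha b hb => ?_) (fun x y hx hy => ?_)
      · have : (X none : MvPolynomial (Option V) K) ^ (n+1) * rename some (a * b)
            = ((X none) ^ n * rename some a) * ((X none) * rename some b) := by
          rw [map_mul]; ring
        rw [this]
        exact Ideal.mul_mem_mul (ih a ha) (xw_mul_rename_mem hb)
      · have : (X none : MvPolynomial (Option V) K) ^ (n+1) * rename some (x + y)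
            = (X none) ^ (n+1) * rename some x + (X none) ^ (n+1) * rename some y := by
          rw [map_add]; ring
        rw [this]
        exact Ideal.add_mem _ hx hy

end GraphSide


lemma bin {S : Type*} [CommRing S] (A B : Ideal S) :
    ∀ n : ℕ, (A ⊔ B) ^ n ≤ ⨆ k : Fin (n + 1), A ^ (n - (k : ℕ)) * B ^ (k : ℕ) := by
  intro n
  induction n with
  | zero =>
      have h0 := le_iSup (fun k : Fin 1 => A ^ (0 - (k : ℕ)) * B ^ (k : ℕ)) 0
      simpa using h0
  | succ n ih =>
      rw [pow_succ]
      refine le_trans (Ideal.mul_mono_left ih) ?_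
      rw [Ideal.mul_le]
      intro r hr s hs
      rcases Submodule.mem_sup.1 hs with ⟨sa, hsa, sb, hsb, rfl⟩
      rw [mul_add]
      refine Submodule.add_mem _ ?_ ?_
      · refine Submodule.iSup_induction
          (motive := fun x => x * sa ∈ ⨆ k : Fin (n + 2), A ^ (n + 1 - (k : ℕ)) * B ^ (k : ℕ))
          _ hr (fun k x hx => ?_) (by simp) (fun x y hx hy => by rw [add_mul]; exact add_mem hx hy)
        have hk : (k : ℕ) ≤ n := Nat.lt_succ_iff.1 k.isLt
        have heq : A ^ (n - (k : ℕ)) * B ^ (k : ℕ) * A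
            = A ^ (n + 1 - (k : ℕ)) * B ^ (k : ℕ) := by
          rw [mul_right_comm, ← pow_succ, Nat.succ_sub hk]
        have hmem : x * sa ∈ A ^ (n + 1 - (k : ℕ)) * B ^ (k : ℕ) := by
          rw [← heq]; exact Ideal.mul_mem_mul hx hsa
        exact le_iSup (fun k : Fin (n + 2) => A ^ (n + 1 - (k : ℕ)) * B ^ (k : ℕ))
          ⟨(k : ℕ), by omega⟩ hmem
      · refine Submodule.iSup_induction
          (motive := fun x => x * sb ∈ ⨆ k : Fin (n + 2), A ^ (n + 1 - (k : ℕ)) * B ^ (k : ℕ))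
          _ hr (fun k x hx => ?_) (by simp) (fun x y hx hy => by rw [add_mul]; exact add_mem hx hy)
        have hk : (k : ℕ) ≤ n := Nat.lt_succ_iff.1 k.isLt
        have heq : A ^ (n - (k : ℕ)) * B ^ (k : ℕ) * B
            = A ^ (n + 1 - ((k : ℕ) + 1)) * B ^ ((k : ℕ) + 1) := by
          rw [mul_assoc, ← pow_succ, Nat.succ_sub_succ]
        have hmem : x * sb ∈ A ^ (n + 1 - ((k : ℕ) + 1)) * B ^ ((k : ℕ) + 1) := by
          rw [← heq]; exact Ideal.mul_mem_mul hx hsb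
        exact le_iSup (fun k : Fin (n + 2) => A ^ (n + 1 - (k : ℕ)) * B ^ (k : ℕ))
          ⟨(k : ℕ) + 1, by omega⟩ hmem


section Transport
variable {V K : Type*} [Field K]

/-- The identification of `MvPolynomial (Option V) K` with polynomomials in one variable
(corresponding to `none`) over `MvPolynomial V K`. -/
noncomputable def ee (V K : Type*) [Field K] :
    MvPolynomial (Option V) K ≃ₐ[K] Polynomial (MvPolynomial V K) :=
  optionEquivLeft K V

lemma ee_X_none : ee V K (X none) = Polynomial.X := optionEquivLeft_X_none K V

lemma ee_X_some (v : V) : ee V K (X (some v)) = Polynomial.C (X v) :=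
  optionEquivLeft_X_some K V v

lemma ee_rename (g : MvPolynomial V K) : ee V K (rename some g) = Polynomial.C g := by
  induction g using MvPolynomial.induction_on with
  | C a => rw [rename_C]; exact optionEquivLeft_C K V a
  | add p q hp hq => rw [map_add, map_add, hp, hq, map_add]
  | mul_X p v hp => rw [map_mul, map_mul, rename_X, hp, ee_X_some, ← map_mul]

lemma ee_symm_C (g : MvPolynomial V K) :
    (ee V K).symm (Polynomial.C g) = rename some g := by
  rw [← ee_rename, AlgEquiv.symm_apply_apply]

/-- Auxiliary ideal: intersection of the edge ideals coming from `G` inside the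
polynomial ring of the cone. -/
noncomputable def J2 (K : Type*) [Field K] (G : SimpleGraph V) :
    Ideal (MvPolynomial (Option V) K) :=
  ⨅ (u : V) (v : V) (_ : G.Adj u v),
    Ideal.span {(X (some u) : MvPolynomial (Option V) K), X (some v)}

lemma mem_J2_iff {G : SimpleGraph V} {p : MvPolynomial (Option V) K} :
    p ∈ J2 K G ↔ ∀ u v : V, G.Adj u v →
      p ∈ Ideal.span {(X (some u) : MvPolynomial (Option V) K), X (some v)} := by
  simp [J2, Ideal.mem_iInf]

lemma cone_adj_none_some (G : SimpleGraph V) (v : V) : (cone G).Adj none (some v) :=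
  ⟨by simp, fun u _ h1 _ => by cases h1⟩

lemma cone_adj_of_adj {G : SimpleGraph V} {u v : V} (h : G.Adj u v) :
    (cone G).Adj (some u) (some v) :=
  ⟨by simpa using G.ne_of_adj h, fun u' v' h1 h2 => by
    cases h1; cases h2; exact h⟩

lemma J2_le_comap {G : SimpleGraph V} {y : MvPolynomial (Option V) K} (hy : y ∈ J2 K G) :
    ee V K y ∈ Ideal.map (Polynomial.C : MvPolynomial V K →+* _) (coverIdeal K G) := by
  rw [Ideal.mem_map_C_iff]
  intro n
  refine mem_coverIdeal_iff.2 fun u v huv => ?_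
  have h1 := mem_J2_iff.1 hy u v huv
  obtain ⟨s1, s2, hs⟩ := Ideal.mem_span_pair.1 h1
  have h2 : ee V K y = ee V K s1 * Polynomial.C (X u) + ee V K s2 * Polynomial.C (X v) := by
    rw [← hs, map_add, map_mul, map_mul, ee_X_some, ee_X_some]
  rw [h2]
  refine Ideal.mem_span_pair.2 ⟨(ee V K s1).coeff n, (ee V K s2).coeff n, ?_⟩
  simp [Polynomial.coeff_add, Polynomial.coeff_mul_C]

variable [Fintype V]

/-- Upper bound for the cover ideal of the cone. -/
lemma cover_cone_le {G : SimpleGraph V} :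
    coverIdeal K (cone G) ≤
      Ideal.span {(X none : MvPolynomial (Option V) K)} * J2 K G ⊔
        Ideal.span {rename some (∏ v : V, (X v : MvPolynomial V K))} := by
  intro p hp
  set q : Polynomial (MvPolynomial V K) := ee V K p with hq
  -- all variables divide the constant coefficient
  have h1 : ∀ v : V, (X v : MvPolynomial V K) ∣ q.coeff 0 := by
    intro v
    have h2 := mem_coverIdeal_iff.1 hp none (some v) (cone_adj_none_some G v)
    obtain ⟨s1, s2, hs⟩ := Ideal.mem_span_pair.1 h2
    have h3 : q = ee V K s1 * Polynomial.X + ee V K s2 * Polynomial.C (X v) := by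
      rw [hq, ← hs, map_add, map_mul, map_mul, ee_X_none, ee_X_some]
    refine ⟨(ee V K s2).coeff 0, ?_⟩
    rw [h3]
    simp [Polynomial.mul_coeff_zero, mul_comm]
  obtain ⟨c', hc'⟩ := prod_X_dvd h1
  have hX : Polynomial.X ∣ (q - Polynomial.C (q.coeff 0)) := by
    rw [Polynomial.X_dvd_iff]
    simp
  obtain ⟨q1, hq1⟩ := hX
  -- decomposition
  have hdec : p = X none * (ee V K).symm q1
      + rename some (∏ v : V, (X v : MvPolynomial V K)) * rename some c' := by
    apply (ee V K).injective
    rw [map_add, map_mul, map_mul, ee_X_none, AlgEquiv.apply_symm_apply,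
      ee_rename, ee_rename, ← map_mul, ← hc', ← hq1]
    ring
  -- the quotient is in J2
  have hw1 : (ee V K).symm q1 ∈ J2 K G := by
    refine mem_J2_iff.2 fun u v huv => ?_
    have h2 := mem_coverIdeal_iff.1 hp (some u) (some v) (cone_adj_of_adj huv)
    obtain ⟨s1, s2, hs⟩ := Ideal.mem_span_pair.1 h2
    have h3 : q = ee V K s1 * Polynomial.C (X u) + ee V K s2 * Polynomial.C (X v) := by
      rw [hq, ← hs, map_add, map_mul, map_mul, ee_X_some, ee_X_some]
    have hcoeff : ∀ n : ℕ, q1.coeff n ∈ Ideal.span ({X u, X v} : Set (MvPolynomial V K)) := by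
      intro n
      have h4 : q1.coeff n = q.coeff (n + 1) := by
        have h5 : Polynomial.X * q1 = q - Polynomial.C (q.coeff 0) := hq1.symm
        have h6 := congrArg (fun r => Polynomial.coeff r (n + 1)) h5
        simpa [Polynomial.coeff_X_mul] using h6
      rw [h4, h3]
      refine Ideal.mem_span_pair.2 ⟨(ee V K s1).coeff (n+1), (ee V K s2).coeff (n+1), ?_⟩
      simp [Polynomial.coeff_add, Polynomial.coeff_mul_C]
    have hq1mem : q1 ∈ Ideal.map (Polynomial.C : MvPolynomial V K →+* _)
        (Ideal.span ({X u, X v} : Set (MvPolynomial V K))) :=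
      Ideal.mem_map_C_iff.2 hcoeff
    rw [Ideal.map_span, Set.image_pair] at hq1mem
    obtain ⟨s1', s2', hs'⟩ := Ideal.mem_span_pair.1 hq1mem
    refine Ideal.mem_span_pair.2 ⟨(ee V K).symm s1', (ee V K).symm s2', ?_⟩
    apply (ee V K).injective
    rw [map_add, map_mul, map_mul, AlgEquiv.apply_symm_apply, AlgEquiv.apply_symm_apply,
      AlgEquiv.apply_symm_apply, ee_X_some, ee_X_some, hs']
  rw [hdec]
  refine Submodule.mem_sup.2 ⟨_, ?_, _, ?_, rfl⟩
  · exact Ideal.mul_mem_mul (Ideal.mem_span_singleton_self _) hw1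
  · exact Ideal.mem_span_singleton.2 ⟨rename some c', rfl⟩

end Transport

section Extraction
variable {V K : Type*} [Field K] [Fintype V] {G : SimpleGraph V}

lemma J2_pow_mem {a : ℕ} {y : MvPolynomial (Option V) K} (hy : y ∈ (J2 K G) ^ a) :
    ee V K y ∈ Ideal.map (Polynomial.C : MvPolynomial V K →+* _) ((coverIdeal K G) ^ a) := by
  have hmap : Ideal.map ((ee V K : MvPolynomial (Option V) K ≃ₐ[K] _) :
        MvPolynomial (Option V) K →+* Polynomial (MvPolynomial V K)) (J2 K G)
      ≤ Ideal.map (Polynomial.C : MvPolynomial V K →+* _) (coverIdeal K G) := by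
    refine Ideal.map_le_iff_le_comap.2 fun z hz => ?_
    exact Ideal.mem_comap.2 (J2_le_comap hz)
  have h1 : ee V K y ∈ Ideal.map ((ee V K : MvPolynomial (Option V) K ≃ₐ[K] _) :
      MvPolynomial (Option V) K →+* Polynomial (MvPolynomial V K)) ((J2 K G) ^ a) :=
    Ideal.mem_map_of_mem _ hy
  rw [Ideal.map_pow] at h1
  rw [Ideal.map_pow]
  exact Ideal.pow_right_mono hmap a h1

lemma extraction {f : MvPolynomial V K} {t : ℕ}
    (hPhi : (X none : MvPolynomial (Option V) K) ^ t *
        rename some ((∏ v : V, X v) * f) ∈ (coverIdeal K (cone G)) ^ (t + 1)) :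
    f ∈ (coverIdeal K G) ^ t := by
  classical
  set PG := ∏ v : V, (X v : MvPolynomial V K) with hPG
  set A := Ideal.span {(X none : MvPolynomial (Option V) K)} * J2 K G with hA
  set B := Ideal.span {(rename some PG : MvPolynomial (Option V) K)} with hB
  have h1 : (X none : MvPolynomial (Option V) K) ^ t * rename some (PG * f)
      ∈ (A ⊔ B) ^ (t + 1) :=
    Ideal.pow_right_mono cover_cone_le (t + 1) hPhi
  have h2 := bin A B (t + 1) h1
  have key : (ee V K ((X none : MvPolynomial (Option V) K) ^ t
        * rename some (PG * f))).coeff t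
      ∈ Ideal.span {PG} * (coverIdeal K G) ^ t := by
    refine Submodule.iSup_induction
      (motive := fun x => (ee V K x).coeff t ∈ Ideal.span {PG} * (coverIdeal K G) ^ t) _ h2
      (fun k x hx => ?_) (by simp)
      (fun x y hx hy => by
        rw [map_add, Polynomial.coeff_add]
        exact add_mem hx hy)
    show (ee V K x).coeff t ∈ Ideal.span {PG} * (coverIdeal K G) ^ t
    have hAB : A ^ (t + 1 - (k : ℕ)) * B ^ (k : ℕ)
        = Ideal.span {(X none : MvPolynomial (Option V) K) ^ (t + 1 - (k : ℕ))}
          * ((J2 K G) ^ (t + 1 - (k : ℕ))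
            * Ideal.span {(rename some PG : MvPolynomial (Option V) K) ^ (k : ℕ)}) := by
      rw [hA, hB, mul_pow, Ideal.span_singleton_pow, Ideal.span_singleton_pow, mul_assoc]
    rw [hAB] at hx
    obtain ⟨z, hz, hzx⟩ := Ideal.mem_span_singleton_mul.1 hx
    rw [mul_comm] at hz
    obtain ⟨y, hy, hyz⟩ := Ideal.mem_span_singleton_mul.1 hz
    have hex : ee V K x = Polynomial.X ^ (t + 1 - (k : ℕ))
        * (Polynomial.C PG ^ (k : ℕ) * ee V K y) := by
      rw [← hzx, ← hyz, map_mul, map_mul, map_pow, map_pow, ee_X_none, ee_rename]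
    by_cases hk : (k : ℕ) = 0
    · rw [hex, hk, mul_comm (Polynomial.X ^ (t + 1 - 0)), Polynomial.coeff_mul_X_pow']
      simp
    · have hk1 : 1 ≤ (k : ℕ) := Nat.one_le_iff_ne_zero.2 hk
      have hkt : (k : ℕ) ≤ t + 1 := Nat.lt_succ_iff.1 k.isLt
      have hle : t + 1 - (k : ℕ) ≤ t := by omega
      rw [hex, mul_comm (Polynomial.X ^ (t + 1 - (k : ℕ))), Polynomial.coeff_mul_X_pow',
        if_pos hle, ← map_pow, Polynomial.coeff_C_mul]
      have hy' : (ee V K y).coeff (t - (t + 1 - (k : ℕ)))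
          ∈ (coverIdeal K G) ^ (t + 1 - (k : ℕ)) :=
        Ideal.mem_map_C_iff.1 (J2_pow_mem hy) _
      have hsplit : PG ^ (k : ℕ) = PG * PG ^ ((k : ℕ) - 1) := by
        conv_lhs => rw [show (k : ℕ) = ((k : ℕ) - 1) + 1 by omega]
        rw [pow_succ']
      rw [hsplit, mul_assoc]
      have hmem2 : PG ^ ((k : ℕ) - 1) * (ee V K y).coeff (t - (t + 1 - (k : ℕ)))
          ∈ (coverIdeal K G) ^ ((k : ℕ) - 1) * (coverIdeal K G) ^ (t + 1 - (k : ℕ)) :=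
        Ideal.mul_mem_mul (Ideal.pow_mem_pow coverIdeal_prod_X_mem _) hy'
      rw [← pow_add, show (k : ℕ) - 1 + (t + 1 - (k : ℕ)) = t by omega] at hmem2
      exact Ideal.mul_mem_mul (Ideal.mem_span_singleton_self PG) hmem2
  have hEPhi : ee V K ((X none : MvPolynomial (Option V) K) ^ t * rename some (PG * f))
      = Polynomial.C (PG * f) * Polynomial.X ^ t := by
    rw [map_mul, map_pow, ee_X_none, ee_rename]; ring
  rw [hEPhi, Polynomial.coeff_mul_X_pow', if_pos le_rfl, Nat.sub_self,
    Polynomial.coeff_C_zero] at key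
  obtain ⟨z, hzJ, hz⟩ := Ideal.mem_span_singleton_mul.1 key
  have hzf : z = f := mul_left_cancel₀ prod_X_ne_zero hz
  rwa [hzf] at hzJ

end Extraction

end Stmt8

theorem stmt_8 {V K : Type*} [Fintype V] [Field K]
    (G : SimpleGraph V) (hG : G.Connected)
    (t : ℕ) (ht : 1 ≤ t)
    (h : Ideal.span (Set.range (X : V → MvPolynomial V K)) ∈
      associatedPrimes (MvPolynomial V K)
        ((MvPolynomial V K) ⧸ (coverIdeal K G) ^ t)) :
    Ideal.span (Set.range (X : Option V → MvPolynomial (Option V) K)) ∈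
      associatedPrimes (MvPolynomial (Option V) K)
        ((MvPolynomial (Option V) K) ⧸ (coverIdeal K (cone G)) ^ (t + 1)) := by
  classical
  obtain ⟨hprime, x, hx⟩ := isAssociatedPrime_iff.1 h
  obtain ⟨f, rfl⟩ := Ideal.Quotient.mk_surjective x
  -- characterize membership in terms of multiplication with `f`
  have hchar : ∀ r : MvPolynomial V K,
      r ∈ Ideal.span (Set.range (X : V → MvPolynomial V K)) ↔
        r * f ∈ (coverIdeal K G) ^ t := by
    intro r
    rw [hx, Submodule.mem_colon_singleton, Submodule.mem_bot]
    have hsmul : r • (Ideal.Quotient.mk ((coverIdeal K G) ^ t) f)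
        = Ideal.Quotient.mk ((coverIdeal K G) ^ t) (r * f) :=
      (Submodule.Quotient.mk_smul ((coverIdeal K G) ^ t) r f).symm
    rw [hsmul, Ideal.Quotient.eq_zero_iff_mem]
  have hXvf : ∀ v : V, (X v : MvPolynomial V K) * f ∈ (coverIdeal K G) ^ t :=
    fun v => (hchar (X v)).1 (Ideal.subset_span ⟨v, rfl⟩)
  have hfnot : f ∉ (coverIdeal K G) ^ t := by
    intro hf
    have h1 : (1 : MvPolynomial V K) ∈
        Ideal.span (Set.range (X : V → MvPolynomial V K)) :=
      (hchar 1).2 (by rwa [one_mul])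
    exact hprime.ne_top ((Ideal.eq_top_iff_one _).2 h1)
  -- the witness
  set Φ : MvPolynomial (Option V) K :=
    (X none) ^ t * rename some ((∏ v : V, X v) * f) with hPhidef
  have hPS : (rename some (∏ v : V, (X v : MvPolynomial V K)) : MvPolynomial (Option V) K)
      = ∏ v : V, X (some v) := by
    rw [map_prod]
    exact Finset.prod_congr rfl fun v _ => rename_X _ _
  have hPhinot : Φ ∉ (coverIdeal K (cone G)) ^ (t + 1) := fun hmem => hfnot (Stmt8.extraction hmem)
  have hmemX : ∀ a : Option V, (X a : MvPolynomial (Option V) K) * Φ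
      ∈ (coverIdeal K (cone G)) ^ (t + 1) := by
    intro a
    match a with
    | none =>
        have heq : (X none : MvPolynomial (Option V) K) * Φ
            = (X none) ^ (t + 1) * rename some ((∏ v : V, X v) * f) := by
          rw [hPhidef, pow_succ]; ring
        rw [heq]
        exact Stmt8.xw_pow_mul_rename_mem_pow (t + 1) _ (Stmt8.prod_X_mul_mem hG hXvf)
    | some v =>
        have hXv : (rename some (X v) : MvPolynomial (Option V) K) = X (some v) :=
          rename_X _ _
        have heq : (X (some v) : MvPolynomial (Option V) K) * Φ
            = ((X none) ^ t * rename some (X v * f))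
              * rename some (∏ v : V, (X v : MvPolynomial V K)) := by
          rw [hPhidef, map_mul, map_mul, hXv]; ring
        rw [heq, pow_succ]
        refine Ideal.mul_mem_mul (Stmt8.xw_pow_mul_rename_mem_pow t _ (hXvf v)) ?_
        rw [hPS]
        exact Stmt8.PS_mem_coverIdeal_cone
  -- the colon ideal
  have hle : Ideal.span (Set.range (X : Option V → MvPolynomial (Option V) K))
      ≤ ((coverIdeal K (cone G)) ^ (t + 1)).colon (Ideal.span {Φ}) := by
    rw [Ideal.span_le]
    rintro - ⟨a, rfl⟩
    exact Ideal.mem_colon_span_singleton.2 (hmemX a)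
  have hne : ((coverIdeal K (cone G)) ^ (t + 1)).colon (Ideal.span {Φ}) ≠ ⊤ := by
    intro htop
    have h1 : (1 : MvPolynomial (Option V) K)
        ∈ ((coverIdeal K (cone G)) ^ (t + 1)).colon (Ideal.span {Φ}) := by
      rw [htop]; trivial
    exact hPhinot (by simpa using Ideal.mem_colon_span_singleton.1 h1)
  have heq : Ideal.span (Set.range (X : Option V → MvPolynomial (Option V) K))
      = ((coverIdeal K (cone G)) ^ (t + 1)).colon (Ideal.span {Φ}) :=
    Stmt8.span_range_X_isMaximal.eq_of_le hne hle
  refine isAssociatedPrime_iff.2 ⟨Stmt8.span_range_X_isMaximal.isPrime,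
    Ideal.Quotient.mk ((coverIdeal K (cone G)) ^ (t + 1)) Φ, ?_⟩
  ext r
  have hsmul : r • (Ideal.Quotient.mk ((coverIdeal K (cone G)) ^ (t + 1)) Φ)
      = Ideal.Quotient.mk ((coverIdeal K (cone G)) ^ (t + 1)) (r * Φ) :=
    (Submodule.Quotient.mk_smul ((coverIdeal K (cone G)) ^ (t + 1)) r Φ).symm
  rw [Submodule.mem_colon_singleton, Submodule.mem_bot, hsmul, Ideal.Quotient.eq_zero_iff_mem,
    ← Ideal.mem_colon_span_singleton, ← heq]
end

section
/- Let G be a finite connected simple graph and let H = C(G) be the cone over G, obtained by adding a new vertex w to G and joining w to every vertex of G. Let R_G = K[x_v : v ∈ V(G)] and R_H = K[x_v : v ∈ V(H)] be polynomial rings over a field K, and let I(G) ⊆ R_G and I(H) ⊆ R_H be the edge ideals of G and H. If the prime ideal (x_v : v ∈ V(G)) belongs to Ass(R_G/I(G)^t) for some integer t ≥ 2, then the prime ideal (x_v : v ∈ V(H)) belongs to Ass(R_H/I(H)^t). -/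
open MvPolynomial

/-- The edge ideal `I(G) = (x_u x_v : {u,v} ∈ E(G))` of a simple graph. -/
noncomputable def edgeIdeal {V : Type*} (K : Type*) [Field K] (G : SimpleGraph V) :
    Ideal (MvPolynomial V K) :=
  Ideal.span {f : MvPolynomial V K | ∃ u v : V, G.Adj u v ∧ f = X u * X v}

section Jid
variable {R : Type*} [CommRing R] (I m : Ideal R)

/-- `Jid I m k i = I^k + I^(k-1)m + ... + I^(k-i)m^i` (exponents truncated). -/
noncomputable def Jid : ℕ → ℕ → Ideal R
  | k, 0 => I ^ (k - 0) * m ^ 0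
  | k, (i+1) => Jid k i ⊔ I ^ (k - (i+1)) * m ^ (i+1)

lemma Jid_succ (k i : ℕ) : Jid I m k (i+1) = Jid I m k i ⊔ I ^ (k - (i+1)) * m ^ (i+1) := rfl

lemma Jid_zero (k : ℕ) : Jid I m k 0 = I ^ k := by
  show I ^ (k-0) * m ^ 0 = I ^ k
  simp

lemma Jid_mono {i i' : ℕ} (h : i ≤ i') (k : ℕ) : Jid I m k i ≤ Jid I m k i' := by
  induction i' with
  | zero => exact Nat.le_zero.mp h ▸ le_rfl
  | succ n ih =>
    rcases Nat.lt_or_ge i (n+1) with h' | h'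
    · exact (ih (by omega)).trans le_sup_left
    · exact (by omega : i = n + 1) ▸ le_rfl

lemma term_le_Jid {j i : ℕ} (h : j ≤ i) (k : ℕ) : I ^ (k - j) * m ^ j ≤ Jid I m k i := by
  refine le_trans ?_ (Jid_mono I m h k)
  cases j with
  | zero => exact le_rfl
  | succ n => exact le_sup_right

lemma mem_Jid_of_term {j i k : ℕ} {x : R} (hx : x ∈ I ^ (k - j) * m ^ j) (h : j ≤ i) :
    x ∈ Jid I m k i := term_le_Jid I m h k hx

lemma Jid_top (i : ℕ) : Jid I m 0 i = ⊤ := by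
  rw [eq_top_iff]
  intro x _
  exact mem_Jid_of_term I m (by simpa using Submodule.mem_top) (Nat.zero_le i)

lemma term_mul_term (k l a b : ℕ) :
    (I ^ (k - a) * m ^ a) * (I ^ (l - b) * m ^ b) ≤ I ^ (k + l - (a + b)) * m ^ (a + b) := by
  rw [mul_mul_mul_comm, ← pow_add, ← pow_add]
  exact Ideal.mul_mono (Ideal.pow_le_pow_right (by omega)) le_rfl

lemma Jid_mul_term (k l b : ℕ) : ∀ i, Jid I m k i * (I ^ (l - b) * m ^ b) ≤ Jid I m (k + l) (i + b)
  | 0 => (term_mul_term I m k l 0 b).trans (term_le_Jid I m (by omega) _)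
  | (i+1) => by
    rw [Jid_succ, Submodule.sup_mul]
    refine sup_le ((Jid_mul_term k l b i).trans (Jid_mono I m (by omega) _)) ?_
    exact (term_mul_term I m k l (i+1) b).trans (term_le_Jid I m (by omega) _)

lemma Jid_mul_Jid (k l i : ℕ) : ∀ j, Jid I m k i * Jid I m l j ≤ Jid I m (k + l) (i + j)
  | 0 => Jid_mul_term I m k l 0 i
  | (j+1) => by
    rw [Jid_succ, Submodule.mul_sup]
    refine sup_le ((Jid_mul_Jid k l i j).trans (Jid_mono I m (by omega) _)) ?_
    exact (Jid_mul_term I m k l (j+1) i).trans (Jid_mono I m (by omega) _)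

/-- The ideal of polynomials whose `s`-th coefficient lies in `Jid I m k s` for all `s`. -/
noncomputable def Pid (k : ℕ) : Ideal (Polynomial R) where
  carrier := {p | ∀ s, p.coeff s ∈ Jid I m k s}
  zero_mem' := fun s => by simp only [Polynomial.coeff_zero]; exact zero_mem _
  add_mem' := fun {p q} hp hq s => by
    rw [Polynomial.coeff_add]; exact add_mem (hp s) (hq s)
  smul_mem' := fun c p hp s => by
    rw [smul_eq_mul, Polynomial.coeff_mul]
    refine sum_mem fun x hx => ?_
    have hx2 : x.2 ≤ s := by
      have := Finset.HasAntidiagonal.mem_antidiagonal.mp hx; omega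
    exact Ideal.mul_mem_left _ _ (Jid_mono I m hx2 k (hp x.2))

lemma mem_Pid_mul {k l : ℕ} {p q : Polynomial R} (hp : p ∈ Pid I m k) (hq : q ∈ Pid I m l) :
    p * q ∈ Pid I m (k + l) := by
  intro s
  rw [Polynomial.coeff_mul]
  refine sum_mem fun x hx => ?_
  have := Finset.HasAntidiagonal.mem_antidiagonal.mp hx
  exact Jid_mono I m (by omega) (k+l)
    (Jid_mul_Jid I m k l x.1 x.2 (Ideal.mul_mem_mul (hp x.1) (hq x.2)))

lemma pow_le_Pid {A : Ideal (Polynomial R)} (hA : A ≤ Pid I m 1) (n : ℕ) :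
    A ^ n ≤ Pid I m n := by
  induction n with
  | zero =>
    rw [pow_zero, Ideal.one_eq_top]
    intro p _ s
    rw [Jid_top]
    exact Submodule.mem_top
  | succ n ih =>
    rw [pow_succ]
    exact Ideal.mul_le.mpr fun r hr s hs => mem_Pid_mul I m (ih hr) (hA hs)

end Jid

section SpanX
variable {V : Type*} {K : Type*} [CommRing K]

/-- degree of a monomial exponent vector -/
def mdeg (d : V →₀ ℕ) : ℕ := d.sum fun _ n => n

lemma mdeg_add (a b : V →₀ ℕ) : mdeg (a + b) = mdeg a + mdeg b :=
  Finsupp.sum_add_index' (fun _ => rfl) (fun _ _ _ => rfl)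

lemma mdeg_single (v : V) (n : ℕ) : mdeg (Finsupp.single v n) = n :=
  Finsupp.sum_single_index rfl

lemma mdeg_eq_zero {d : V →₀ ℕ} (h : mdeg d = 0) : d = 0 := by
  have h2 : ∀ v ∈ d.support, d v = 0 :=
    (Finset.sum_eq_zero_iff).mp h
  ext v
  by_cases hv : v ∈ d.support
  · exact h2 v hv
  · simpa using (Finsupp.notMem_support_iff.mp hv)

lemma monomial_mem_pow (d : V →₀ ℕ) (c : K) :
    monomial d c ∈ (Ideal.span (Set.range (X : V → MvPolynomial V K))) ^ (mdeg d) := by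
  induction d using Finsupp.induction with
  | zero => simpa [mdeg] using Submodule.mem_top
  | single_add a b f ha hb ih =>
    have : monomial (Finsupp.single a b + f) c
        = (X a ^ b : MvPolynomial V K) * monomial f c := by
      rw [X_pow_eq_monomial, monomial_mul, one_mul]
    rw [this, mdeg_add, mdeg_single, pow_add]
    exact Ideal.mul_mem_mul
      (Ideal.pow_mem_pow (Ideal.subset_span (Set.mem_range_self a)) b) ih

lemma mem_pow_span_X {f : MvPolynomial V K} {k : ℕ}
    (hf : ∀ d ∈ f.support, k ≤ mdeg d) :
    f ∈ (Ideal.span (Set.range (X : V → MvPolynomial V K))) ^ k := by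
  rw [as_sum f]
  exact sum_mem fun d hd => Ideal.pow_le_pow_right (hf d hd) (monomial_mem_pow d _)

/-- Ideal of polynomials all of whose monomials have degree ≥ k. -/
noncomputable def lowIdeal (k : ℕ) : Ideal (MvPolynomial V K) where
  carrier := {f | ∀ d ∈ f.support, k ≤ mdeg d}
  zero_mem' := by simp
  add_mem' := fun {p q} hp hq d hd => by
    classical
    rcases Finset.mem_union.mp (support_add hd) with h | h
    · exact hp d h
    · exact hq d h
  smul_mem' := fun c p hp d hd => by
    classical
    obtain ⟨a, ha, b, hb, rfl⟩ := Finset.mem_add.mp (support_mul c p hd)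
    rw [mdeg_add]
    exact le_add_of_le_right (hp b hb)

lemma lowIdeal_mul (k l : ℕ) :
    (lowIdeal k : Ideal (MvPolynomial V K)) * lowIdeal l ≤ lowIdeal (k + l) := by
  classical
  refine Ideal.mul_le.mpr fun r hr s hs d hd => ?_
  obtain ⟨a, ha, b, hb, rfl⟩ := Finset.mem_add.mp (support_mul r s hd)
  rw [mdeg_add]
  exact add_le_add (hr a ha) (hs b hb)

lemma pow_le_lowIdeal {A : Ideal (MvPolynomial V K)} {a : ℕ} (hA : A ≤ lowIdeal a) (n : ℕ) :
    A ^ n ≤ lowIdeal (n * a) := by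
  induction n with
  | zero =>
    intro p _ d _
    simp
  | succ n ih =>
    rw [pow_succ, Nat.succ_mul]
    exact (Ideal.mul_mono ih hA).trans (lowIdeal_mul _ _)

lemma span_X_le_ker :
    Ideal.span (Set.range (X : V → MvPolynomial V K)) ≤ RingHom.ker constantCoeff := by
  rw [Ideal.span_le]
  rintro _ ⟨v, rfl⟩
  simp [RingHom.mem_ker]

lemma ker_le_span_X {f : MvPolynomial V K} (hf : constantCoeff f = 0) :
    f ∈ Ideal.span (Set.range (X : V → MvPolynomial V K)) := by
  rw [← pow_one (Ideal.span _)]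
  refine mem_pow_span_X fun d hd => ?_
  by_contra hlt
  have h0 : d = 0 := mdeg_eq_zero (by omega)
  rw [h0] at hd
  exact (mem_support_iff.mp hd) (by simpa [constantCoeff_eq] using hf)

end SpanX

section ConeLemmas
variable {V : Type*} {K : Type*} [Field K] (G : SimpleGraph V)

lemma cone_adj_some_some {u v : V} (h : G.Adj u v) : (cone G).Adj (some u) (some v) := by
  refine ⟨by simpa using h.ne, fun u' v' h1 h2 => ?_⟩
  injection h1 with e1; injection h2 with e2; subst e1; subst e2; exact h

lemma cone_adj_some_none (v : V) : (cone G).Adj (some v) none := by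
  refine ⟨by simp, fun u' v' h1 h2 => ?_⟩
  cases h2

lemma smul_mk_quot {R : Type*} [CommRing R] (I : Ideal R) (r x : R) :
    r • (Ideal.Quotient.mk I x) = Ideal.Quotient.mk I (r * x) := by
  rw [← Ideal.Quotient.mk_eq_mk, ← Ideal.Quotient.mk_eq_mk, ← Submodule.Quotient.mk_smul,
    smul_eq_mul]

lemma optionEquivLeft_rename_some (f : MvPolynomial V K) :
    optionEquivLeft K V (rename some f) = Polynomial.C f := by
  induction f using MvPolynomial.induction_on with
  | C a => rw [rename_C, optionEquivLeft_C]
  | add p q hp hq => rw [map_add, map_add, hp, hq, map_add]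
  | mul_X p n ih => rw [map_mul, map_mul, rename_X, optionEquivLeft_X_some, ih, map_mul]

lemma map_edgeIdeal_le :
    Ideal.map (rename (some : V → Option V) : MvPolynomial V K →ₐ[K] MvPolynomial (Option V) K)
      (edgeIdeal K G) ≤ edgeIdeal K (cone G) := by
  rw [edgeIdeal, Ideal.map_span, Ideal.span_le]
  rintro _ ⟨p, ⟨u, v, huv, rfl⟩, rfl⟩
  rw [map_mul, rename_X, rename_X]
  exact Ideal.subset_span ⟨some u, some v, cone_adj_some_some G huv, rfl⟩

lemma map_spanX_mul_le :
    Ideal.map (rename (some : V → Option V) : MvPolynomial V K →ₐ[K] MvPolynomial (Option V) K)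
      (Ideal.span (Set.range X)) * Ideal.span {(X none : MvPolynomial (Option V) K)} ≤
      edgeIdeal K (cone G) := by
  rw [Ideal.map_span, Ideal.span_mul_span, Ideal.span_le]
  intro z hz
  simp only [Set.mem_mul, Set.mem_singleton_iff] at hz
  obtain ⟨s, ⟨p, ⟨v, rfl⟩, rfl⟩, t, ht, rfl⟩ := hz
  rw [ht, rename_X]
  exact Ideal.subset_span ⟨some v, none, cone_adj_some_none G v, rfl⟩

end ConeLemmas

set_option maxHeartbeats 1000000 in
theorem stmt_9 {V K : Type*} [Fintype V] [Field K]
    (G : SimpleGraph V) (hG : G.Connected)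
    (t : ℕ) (ht : 2 ≤ t)
    (h : Ideal.span (Set.range (X : V → MvPolynomial V K)) ∈
      associatedPrimes (MvPolynomial V K)
        ((MvPolynomial V K) ⧸ (edgeIdeal K G) ^ t)) :
    Ideal.span (Set.range (X : Option V → MvPolynomial (Option V) K)) ∈
      associatedPrimes (MvPolynomial (Option V) K)
        ((MvPolynomial (Option V) K) ⧸ (edgeIdeal K (cone G)) ^ t) := by
  classical
  obtain ⟨-, x, hx⟩ := isAssociatedPrime_iff.mp h
  obtain ⟨f, rfl⟩ := Ideal.Quotient.mk_surjective x
  -- abbreviations (plain definitions, no `set`)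
  let I : Ideal (MvPolynomial V K) := edgeIdeal K G
  let m : Ideal (MvPolynomial V K) := Ideal.span (Set.range (X : V → MvPolynomial V K))
  let IH : Ideal (MvPolynomial (Option V) K) := edgeIdeal K (cone G)
  let m' : Ideal (MvPolynomial (Option V) K) :=
    Ideal.span (Set.range (X : Option V → MvPolynomial (Option V) K))
  let φ := (rename (some : V → Option V) : MvPolynomial V K →ₐ[K] MvPolynomial (Option V) K)
  -- basic facts about f
  have hmne : (1 : MvPolynomial V K) ∉ m := by
    intro h1
    have := span_X_le_ker h1
    simp [RingHom.mem_ker] at this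
  have hv : ∀ v : V, X v * f ∈ I ^ t := by
    intro v
    have hXv : X v ∈ Ideal.span (Set.range (X : V → MvPolynomial V K)) :=
      Ideal.subset_span (Set.mem_range_self v)
    rw [hx, Submodule.mem_colon_singleton, Submodule.mem_bot, smul_mk_quot,
      Ideal.Quotient.eq_zero_iff_mem] at hXv
    exact hXv
  have hf : f ∉ I ^ t := by
    intro hmem
    apply hmne
    show (1 : MvPolynomial V K) ∈ Ideal.span (Set.range X)
    rw [hx, Submodule.mem_colon_singleton, Submodule.mem_bot, smul_mk_quot, one_mul,
      Ideal.Quotient.eq_zero_iff_mem]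
    exact hmem
  -- f ∈ m ^ t
  have hIlow : I ≤ lowIdeal 2 := by
    rw [show I = edgeIdeal K G from rfl, edgeIdeal, Ideal.span_le]
    rintro _ ⟨u, v, huv, rfl⟩
    intro d hd
    have hXX : (X u * X v : MvPolynomial V K)
        = monomial (Finsupp.single u 1 + Finsupp.single v 1) 1 := by
      rw [X, X, monomial_mul, one_mul]
    rw [hXX, support_monomial] at hd
    simp only [one_ne_zero, if_false, Finset.mem_singleton] at hd
    subst hd
    rw [mdeg_add, mdeg_single, mdeg_single]
  obtain ⟨v0⟩ := hG.nonempty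
  have hsupp : ∀ e ∈ f.support, t ≤ mdeg e := by
    intro e he
    have hmem : Finsupp.single v0 1 + e ∈ (X v0 * f).support := by
      rw [mem_support_iff, coeff_X_mul]
      exact mem_support_iff.mp he
    have h2 := pow_le_lowIdeal hIlow t (hv v0) _ hmem
    rw [mdeg_add, mdeg_single] at h2
    omega
  have hfm : f ∈ m ^ t := mem_pow_span_X hsupp
  have hft : f ∈ Jid I m t t :=
    mem_Jid_of_term I m (by rw [Nat.sub_self, pow_zero, one_mul]; exact hfm) le_rfl
  -- choose the minimal index
  have hex : ∃ i, f ∈ Jid I m t i := ⟨t, hft⟩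
  have hi0 : f ∈ Jid I m t (Nat.find hex) := Nat.find_spec hex
  have hi0pos : Nat.find hex ≠ 0 := by
    intro h0
    rw [h0, Jid_zero] at hi0
    exact hf hi0
  obtain ⟨s, hs⟩ : ∃ s, Nat.find hex = s + 1 := ⟨Nat.find hex - 1, by omega⟩
  have hs1 : f ∈ Jid I m t (s+1) := hs ▸ hi0
  have hs0 : f ∉ Jid I m t s := Nat.find_min hex (by omega)
  -- the witness
  set g : MvPolynomial (Option V) K := φ f * X none ^ s with hgdef
  -- the key ideal inclusion
  have hB : ∀ i, Ideal.map φ (Jid I m t i) *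
      (Ideal.span {(X none : MvPolynomial (Option V) K)}) ^ i ≤ IH ^ t := by
    intro i
    induction i with
    | zero =>
      rw [pow_zero, mul_one, Jid_zero, Ideal.map_pow]
      exact Ideal.pow_right_mono (map_edgeIdeal_le G) t
    | succ i ih =>
      rw [Jid_succ, Ideal.map_sup, Submodule.sup_mul]
      refine sup_le ?_ ?_
      · calc Ideal.map φ (Jid I m t i) *
            Ideal.span {(X none : MvPolynomial (Option V) K)} ^ (i+1)
            = (Ideal.map φ (Jid I m t i) *
                Ideal.span {(X none : MvPolynomial (Option V) K)} ^ i) *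
              Ideal.span {(X none : MvPolynomial (Option V) K)} := by rw [pow_succ, mul_assoc]
        _ ≤ IH ^ t * Ideal.span {(X none : MvPolynomial (Option V) K)} :=
              Ideal.mul_mono ih le_rfl
        _ ≤ IH ^ t := Ideal.mul_le_left
      · calc Ideal.map φ (I ^ (t - (i+1)) * m ^ (i+1)) *
            Ideal.span {(X none : MvPolynomial (Option V) K)} ^ (i+1)
            = Ideal.map φ I ^ (t - (i+1)) *
              (Ideal.map φ m * Ideal.span {(X none : MvPolynomial (Option V) K)}) ^ (i+1) := by
              rw [Ideal.map_mul, Ideal.map_pow, Ideal.map_pow, mul_assoc, ← mul_pow]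
        _ ≤ IH ^ (t - (i+1)) * IH ^ (i+1) :=
              Ideal.mul_mono (Ideal.pow_right_mono (map_edgeIdeal_le G) _)
                (Ideal.pow_right_mono (map_spanX_mul_le G) _)
        _ = IH ^ ((t - (i+1)) + (i+1)) := (pow_add _ _ _).symm
        _ ≤ IH ^ t := Ideal.pow_le_pow_right (by omega)
  -- nonmembership of the witness
  have hng : g ∉ IH ^ t := by
    intro hgmem
    have hPH : Ideal.map ((optionEquivLeft K V).toAlgHom :
        MvPolynomial (Option V) K →ₐ[K] Polynomial (MvPolynomial V K)) IH ≤ Pid I m 1 := by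
      rw [show IH = edgeIdeal K (cone G) from rfl, edgeIdeal, Ideal.map_span, Ideal.span_le]
      rintro _ ⟨p, ⟨u, v, huv, rfl⟩, rfl⟩
      match u, v with
      | some u', some v' =>
        intro s'
        simp only [AlgEquiv.toAlgHom_eq_coe, AlgHom.coe_coe, AlgEquiv.coe_toAlgHom, map_mul, optionEquivLeft_X_some]
        rw [← Polynomial.C_mul, Polynomial.coeff_C]
        split
        · refine mem_Jid_of_term I m ?_ (Nat.zero_le s')
          rw [Nat.sub_zero, pow_one, pow_zero, mul_one]
          exact Ideal.subset_span ⟨u', v', huv.2 u' v' rfl rfl, rfl⟩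
        · exact zero_mem _
      | some u', none =>
        intro s'
        simp only [AlgEquiv.toAlgHom_eq_coe, AlgHom.coe_coe, AlgEquiv.coe_toAlgHom, map_mul, optionEquivLeft_X_some,
          optionEquivLeft_X_none]
        rw [Polynomial.coeff_C_mul, Polynomial.coeff_X]
        split
        · next hs' =>
          rw [mul_one, ← hs']
          refine mem_Jid_of_term I m ?_ le_rfl
          rw [Nat.sub_self, pow_zero, one_mul, pow_one]
          exact Ideal.subset_span (Set.mem_range_self u')
        · rw [mul_zero]; exact zero_mem _
      | none, some v' =>
        intro s'
        simp only [AlgEquiv.toAlgHom_eq_coe, AlgHom.coe_coe, AlgEquiv.coe_toAlgHom, map_mul, optionEquivLeft_X_some,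
          optionEquivLeft_X_none]
        rw [mul_comm, Polynomial.coeff_C_mul, Polynomial.coeff_X]
        split
        · next hs' =>
          rw [mul_one, ← hs']
          refine mem_Jid_of_term I m ?_ le_rfl
          rw [Nat.sub_self, pow_zero, one_mul, pow_one]
          exact Ideal.subset_span (Set.mem_range_self v')
        · rw [mul_zero]; exact zero_mem _
      | none, none => exact absurd rfl huv.1
    have h1 : ((optionEquivLeft K V).toAlgHom :
        MvPolynomial (Option V) K →ₐ[K] Polynomial (MvPolynomial V K)) g ∈
        Ideal.map ((optionEquivLeft K V).toAlgHom :
          MvPolynomial (Option V) K →ₐ[K] Polynomial (MvPolynomial V K)) (IH ^ t) :=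
      Ideal.mem_map_of_mem _ hgmem
    rw [Ideal.map_pow] at h1
    have h2 := pow_le_Pid I m hPH t h1
    have h3 : ((optionEquivLeft K V).toAlgHom :
        MvPolynomial (Option V) K →ₐ[K] Polynomial (MvPolynomial V K)) g
        = Polynomial.C f * Polynomial.X ^ s := by
      simp only [hgdef, AlgEquiv.toAlgHom_eq_coe, AlgHom.coe_coe, AlgEquiv.coe_toAlgHom, map_mul, map_pow,
        optionEquivLeft_X_none]
      rw [show φ f = rename some f from rfl, optionEquivLeft_rename_some]
    have h4 := h2 s
    rw [h3, Polynomial.coeff_C_mul, Polynomial.coeff_X_pow, if_pos rfl, mul_one] at h4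
    exact hs0 h4
  -- maximality of m'
  have hm'eq : m' = RingHom.ker (constantCoeff : MvPolynomial (Option V) K →+* K) :=
    le_antisymm span_X_le_ker (fun p hp => ker_le_span_X (RingHom.mem_ker.mp hp))
  have hm'max : m'.IsMaximal := by
    rw [hm'eq]
    exact RingHom.ker_isMaximal_of_surjective _ (fun a => ⟨C a, by simp⟩)
  -- m' annihilates the witness
  have hle : m' ≤ (Submodule.span (MvPolynomial (Option V) K)
      {Ideal.Quotient.mk (IH ^ t) g}).annihilator := by
    rw [show m' = _ from rfl, Ideal.span_le]
    rintro _ ⟨a, rfl⟩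
    rw [SetLike.mem_coe, Submodule.mem_annihilator_span_singleton, smul_mk_quot,
      Ideal.Quotient.eq_zero_iff_mem]
    match a with
    | none =>
      have heq : X none * g = φ f * X none ^ (s+1) := by
        rw [hgdef]; ring
      rw [heq]
      have hXn : (X none : MvPolynomial (Option V) K) ∈
          Ideal.span {(X none : MvPolynomial (Option V) K)} :=
        Ideal.subset_span (Set.mem_singleton _)
      exact hB (s+1) (Ideal.mul_mem_mul (Ideal.mem_map_of_mem _ hs1)
        (Ideal.pow_mem_pow hXn (s+1)))
    | some v =>
      have heq : X (some v) * g = φ (X v * f) * X none ^ s := by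
        rw [hgdef, show φ (X v * f) = rename some (X v * f) from rfl, map_mul, rename_X]; ring
      rw [heq]
      have hmap : φ (X v * f) ∈ Ideal.map φ (I ^ t) := Ideal.mem_map_of_mem _ (hv v)
      rw [Ideal.map_pow] at hmap
      exact Ideal.mul_mem_right _ _ (Ideal.pow_right_mono (map_edgeIdeal_le G) t hmap)
  have hAne : (Submodule.span (MvPolynomial (Option V) K)
      {Ideal.Quotient.mk (IH ^ t) g}).annihilator ≠ ⊤ := by
    intro htop
    have h1 : (1 : MvPolynomial (Option V) K) ∈ (Submodule.span (MvPolynomial (Option V) K)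
        {Ideal.Quotient.mk (IH ^ t) g}).annihilator := by
      rw [htop]; trivial
    rw [Submodule.mem_annihilator_span_singleton, one_smul,
      Ideal.Quotient.eq_zero_iff_mem] at h1
    exact hng h1
  exact isAssociatedPrime_iff.mpr ⟨hm'max.isPrime, Ideal.Quotient.mk (IH ^ t) g,
    (hm'max.eq_of_le hAne hle).trans (by
      ext r
      rw [Submodule.mem_annihilator_span_singleton, Submodule.mem_colon_singleton,
        Submodule.mem_bot])⟩
end

section
/- Let K be a field, n ≥ 3 an integer, R = K[x_1,…,x_n], and let I(K_n) = (x_i x_j : 1 ≤ i < j ≤ n) be the edge ideal of the complete graph K_n. Then the maximal graded ideal (x_1,…,x_n) belongs to Ass(R/I(K_n)^t) for every integer t ≥ 2. -/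
open MvPolynomial

theorem stmt_11 {K : Type*} [Field K] (n : ℕ) (hn : 3 ≤ n)
    (t : ℕ) (ht : 2 ≤ t) :
    Ideal.span (Set.range (X : Fin n → MvPolynomial (Fin n) K)) ∈
      associatedPrimes (MvPolynomial (Fin n) K)
        ((MvPolynomial (Fin n) K) ⧸
          (Ideal.span {f : MvPolynomial (Fin n) K |
            ∃ i j : Fin n, i < j ∧ f = X i * X j}) ^ t) := by
  classical
  set I : Ideal (MvPolynomial (Fin n) K) :=
    Ideal.span {f : MvPolynomial (Fin n) K | ∃ i j : Fin n, i < j ∧ f = X i * X j} with hI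
  set m : Ideal (MvPolynomial (Fin n) K) :=
    Ideal.span (Set.range (X : Fin n → MvPolynomial (Fin n) K)) with hmdef
  obtain ⟨s, rfl⟩ : ∃ s, t = s + 2 := ⟨t - 2, by omega⟩
  -- m is the kernel of constantCoeff, hence maximal
  have hker : m = RingHom.ker (constantCoeff : MvPolynomial (Fin n) K →+* K) := by
    apply le_antisymm
    · rw [hmdef, Ideal.span_le]
      rintro _ ⟨i, rfl⟩
      simp [RingHom.mem_ker]
    · intro p hp
      rw [RingHom.mem_ker] at hp
      have : p ∈ Ideal.span (MvPolynomial.X '' (Set.univ : Set (Fin n)) :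
          Set (MvPolynomial (Fin n) K)) := by
        rw [mem_ideal_span_X_image]
        intro d hd
        by_contra hcon
        push_neg at hcon
        have hd0 : d = 0 := by
          ext i
          exact hcon i (Set.mem_univ i)
        rw [hd0, MvPolynomial.mem_support_iff] at hd
        exact hd hp
      rwa [Set.image_univ] at this
  have hmax : m.IsMaximal := by
    rw [hker]
    exact RingHom.ker_isMaximal_of_surjective _ (fun r => ⟨C r, constantCoeff_C _ r⟩)
  -- indices
  have h0 : (0 : ℕ) < n := by omega
  have h1 : (1 : ℕ) < n := by omega
  have h2 : (2 : ℕ) < n := by omega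
  set i0 : Fin n := ⟨0, h0⟩
  set i1 : Fin n := ⟨1, h1⟩
  set i2 : Fin n := ⟨2, h2⟩
  have h01 : i0 < i1 := by simp [i0, i1, Fin.lt_def]
  have h02 : i0 < i2 := by simp [i0, i2, Fin.lt_def]
  have h12 : i1 < i2 := by simp [i1, i2, Fin.lt_def]
  -- generators of I
  have hedge : ∀ a b : Fin n, a < b → (X a * X b : MvPolynomial (Fin n) K) ∈ I :=
    fun a b hab => Ideal.subset_span ⟨a, b, hab, rfl⟩
  -- witness
  set u : MvPolynomial (Fin n) K := X i0 ^ (s + 1) * X i1 ^ (s + 1) * X i2 with hu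
  -- every variable kills u mod I^(s+2)
  have hkill : ∀ k : Fin n, X k * u ∈ I ^ (s + 2) := by
    intro k
    by_cases hk0 : k = i0
    · rw [hk0]
      have : X i0 * u = (X i0 * X i1) ^ (s + 1) * (X i0 * X i2) := by
        rw [hu]; ring
      rw [this, pow_succ]
      exact Ideal.mul_mem_mul (Ideal.pow_mem_pow (hedge _ _ h01) _) (hedge _ _ h02)
    · by_cases hk1 : k = i1
      · rw [hk1]
        have : X i1 * u = (X i0 * X i1) ^ (s + 1) * (X i1 * X i2) := by
          rw [hu]; ring
        rw [this, pow_succ]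
        exact Ideal.mul_mem_mul (Ideal.pow_mem_pow (hedge _ _ h01) _) (hedge _ _ h12)
      · have h1k : i1 < k := by
          rw [Fin.lt_def]
          have hne0 : (k : ℕ) ≠ 0 := fun h => hk0 (Fin.ext h)
          have hne1 : (k : ℕ) ≠ 1 := fun h => hk1 (Fin.ext h)
          simp only [i1]
          omega
        have : X k * u = (X i0 * X i1) ^ s * (X i0 * X i2) * (X i1 * X k) := by
          rw [hu]; ring
        rw [this, pow_succ, pow_succ]
        exact Ideal.mul_mem_mul
          (Ideal.mul_mem_mul (Ideal.pow_mem_pow (hedge _ _ h01) _) (hedge _ _ h02))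
          (hedge _ _ h1k)
  -- u is not in I^(s+2)
  have hnot : u ∉ I ^ (s + 2) := by
    intro hmem
    set φ : MvPolynomial (Fin n) K →+* Polynomial K :=
      (aeval (fun _ : Fin n => (Polynomial.X : Polynomial K))).toRingHom with hφ
    have hmap : Ideal.map φ I ≤ Ideal.span {(Polynomial.X : Polynomial K) ^ 2} := by
      rw [Ideal.map_le_iff_le_comap, hI, Ideal.span_le]
      rintro _ ⟨i, j, hij, rfl⟩
      show φ (X i * X j) ∈ Ideal.span {(Polynomial.X : Polynomial K) ^ 2}
      have : φ (X i * X j) = Polynomial.X ^ 2 := by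
        simp [hφ, sq]
      rw [this]
      exact Ideal.subset_span rfl
    have h1 : φ u ∈ Ideal.map φ (I ^ (s + 2)) := Ideal.mem_map_of_mem φ hmem
    rw [Ideal.map_pow] at h1
    have h2 : φ u ∈ Ideal.span {(Polynomial.X : Polynomial K) ^ 2} ^ (s + 2) :=
      Ideal.pow_right_mono hmap (s + 2) h1
    rw [Ideal.span_singleton_pow, Ideal.mem_span_singleton, ← pow_mul] at h2
    have hφu : φ u = Polynomial.X ^ (2 * s + 3) := by
      simp only [hφ, hu, AlgHom.toRingHom_eq_coe, RingHom.coe_coe, map_mul, map_pow, aeval_X]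
      ring
    rw [hφu, Polynomial.X_pow_dvd_iff] at h2
    have := h2 (2 * s + 3) (by omega)
    rw [Polynomial.coeff_X_pow] at this
    simp at this
  -- conclude
  refine isAssociatedPrime_iff.2 ⟨hmax.isPrime, ⟨Ideal.Quotient.mk (I ^ (s + 2)) u, ?_⟩⟩
  have hle : m ≤ (Submodule.span (MvPolynomial (Fin n) K)
      {(Ideal.Quotient.mk (I ^ (s + 2))) u}).annihilator := by
    rw [hmdef, Ideal.span_le]
    rintro _ ⟨k, rfl⟩
    rw [SetLike.mem_coe, Submodule.mem_annihilator_span_singleton]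
    show (Ideal.Quotient.mk (I ^ (s + 2))) (X k * u) = 0
    rw [Ideal.Quotient.eq_zero_iff_mem]
    exact hkill k
  have hne : (Submodule.span (MvPolynomial (Fin n) K)
      {(Ideal.Quotient.mk (I ^ (s + 2))) u}).annihilator ≠ ⊤ := by
    rw [Ne, Ideal.eq_top_iff_one, Submodule.mem_annihilator_span_singleton]
    intro h
    rw [one_smul, Ideal.Quotient.eq_zero_iff_mem] at h
    exact hnot h
  rw [Submodule.bot_colon']
  exact hmax.eq_of_le hne hle
end
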